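/- arXiv:2003.01967 — 4 statements merged into one kernel-verified Lean document; each statement's English description precedes it below -/
import Mathlib

section
/- Let V be a finite-dimensional (complex) vector space, Ω ⊆ ℝ open and bounded, f : Ω → V continuous, p ≥ 1, and set Ω₀ := {t ∈ Ω : f(t) ≠ 0}. Assume that the restriction f|_{Ω₀} is locally absolutely continuous on Ω₀ and that its pointwise derivative satisfies f|_{Ω₀}′ ∈ L^p(Ω₀, V). Then the distributional derivative of f on Ω is (represented by) a measurable function f′ ∈ L^p(Ω, V), and ‖f′‖_{L^p(Ω,V)} = ‖f|_{Ω₀}′‖_{L^p(Ω₀,V)} (the L^p-norms computed with respect to a fixed basis of V). -/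
open MeasureTheory Set
open scoped ENNReal NNReal

noncomputable section

/-- The Lipschitz seminorm (best Lipschitz constant) of `f` on `s`. -/
def lipConstOn {E : Type*} [NormedAddCommGroup E] (f : ℝ → E) (s : Set ℝ) : ℝ :=
  sInf {C : ℝ | 0 ≤ C ∧ ∀ x ∈ s, ∀ y ∈ s, ‖f x - f y‖ ≤ C * |x - y|}

/-- `f` is of class `C^{k,1}` on `s`: it is `C^k` and the `k`-th derivative is Lipschitz. -/
def CkLipOn {E : Type*} [NormedAddCommGroup E] [NormedSpace ℝ E] (k : ℕ) (f : ℝ → E)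
    (s : Set ℝ) : Prop :=
  ContDiffOn ℝ k f s ∧ ∃ C : ℝ, 0 ≤ C ∧ ∀ x ∈ s, ∀ y ∈ s,
    ‖iteratedDerivWithin k f s x - iteratedDerivWithin k f s y‖ ≤ C * |x - y|

/-- The `C^{k,1}` norm of `f` on `s`:
`max_{j ≤ k} sup_s ‖f^{(j)}‖ + Lip_s (f^{(k)})`. -/
def ckLipNorm {E : Type*} [NormedAddCommGroup E] [NormedSpace ℝ E] (k : ℕ) (f : ℝ → E)
    (s : Set ℝ) : ℝ :=
  (⨆ j : Fin (k + 1), ⨆ x : s, ‖iteratedDerivWithin (j : ℕ) f s (x : ℝ)‖) +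
    lipConstOn (iteratedDerivWithin k f s) s

/-- Absolute continuity of `f` on a set `s ⊆ ℝ`. -/
def AbsolutelyContinuousOn {E : Type*} [NormedAddCommGroup E] (f : ℝ → E) (s : Set ℝ) : Prop :=
  ∀ ε > (0 : ℝ), ∃ δ > (0 : ℝ), ∀ (m : ℕ) (a b : Fin m → ℝ),
    (∀ i, a i ≤ b i) → (∀ i, Set.Icc (a i) (b i) ⊆ s) →
    (Pairwise fun i j => Set.Ioo (a i) (b i) ∩ Set.Ioo (a j) (b j) = ∅) →
    (∑ i, (b i - a i)) < δ → (∑ i, ‖f (b i) - f (a i)‖) < ε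

/-- The polynomial map `V = ℂ^N → ℂ^n` associated with a family of polynomials. -/
def polyMap {N n : ℕ} (σ : Fin n → MvPolynomial (Fin N) ℂ) (v : Fin N → ℂ) : Fin n → ℂ :=
  fun j => MvPolynomial.eval v (σ j)

/-- `σ` is a system of basic invariants for the representation `ρ` of `G` on `ℂ^N`:
each `σ j` is `G`-invariant, and every `G`-invariant polynomial lies in the subalgebra
generated by the `σ j`. -/
def IsBasicInvariantSystem {G : Type*} [Group G] {N n : ℕ}
    (ρ : Representation ℂ G (Fin N → ℂ)) (σ : Fin n → MvPolynomial (Fin N) ℂ) : Prop :=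
  (∀ j g v, MvPolynomial.eval (ρ g v) (σ j) = MvPolynomial.eval v (σ j)) ∧
  (∀ q : MvPolynomial (Fin N) ℂ,
    (∀ g v, MvPolynomial.eval (ρ g v) q = MvPolynomial.eval v q) →
      q ∈ Algebra.adjoin ℂ (Set.range σ))

open Filter
open scoped Topology

section AuxiliaryLemmas

lemma chain_lemma {V : Type*} [NormedAddCommGroup V] {ι : Type*} [DecidableEq ι] (u : ℝ → V)
    (x y : ι → ℝ) (s : Finset ι) : ∀ (c d : ℝ), c ≤ d →
    (∀ i ∈ s, x i < y i) →
    (∀ i ∈ s, Set.Icc (x i) (y i) ⊆ Set.Icc c d) →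
    ((s : Set ι).Pairwise fun i j => Set.Ioo (x i) (y i) ∩ Set.Ioo (x j) (y j) = ∅) →
    ∃ (m : ℕ) (a b : Fin m → ℝ), (∀ j, a j ≤ b j) ∧ (∀ j, Set.Icc (a j) (b j) ⊆ Set.Icc c d) ∧
      (Pairwise fun (i j : Fin m) => Set.Ioo (a i) (b i) ∩ Set.Ioo (a j) (b j) = ∅) ∧
      (∑ j, (b j - a j)) + ∑ i ∈ s, (y i - x i) ≤ d - c ∧
      ‖u d - u c‖ ≤ (∑ i ∈ s, ‖u (y i) - u (x i)‖) + ∑ j, ‖u (b j) - u (a j)‖ := by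
  induction s using Finset.strongInduction with
  | _ s ih =>
    intro c d hcd h1 h2 h3
    rcases s.eq_empty_or_nonempty with rfl | hne
    · refine ⟨1, fun _ => c, fun _ => d, fun _ => hcd, fun _ => subset_rfl, ?_, by simp, by simp⟩
      intro i j hij; exact absurd (Subsingleton.elim i j) hij
    · obtain ⟨i₀, hi₀s, hi₀max⟩ := s.exists_max_image x hne
      have hxy₀ : x i₀ < y i₀ := h1 i₀ hi₀s
      have hx₀cd : x i₀ ∈ Set.Icc c d := h2 i₀ hi₀s ⟨le_rfl, hxy₀.le⟩
      have hy₀cd : y i₀ ∈ Set.Icc c d := h2 i₀ hi₀s ⟨hxy₀.le, le_rfl⟩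
      -- all other intervals lie to the left of x i₀
      have hleft : ∀ i ∈ s.erase i₀, y i ≤ x i₀ := by
        intro i hi
        have hine : i ≠ i₀ := Finset.ne_of_mem_erase hi
        have his : i ∈ s := Finset.mem_of_mem_erase hi
        by_contra hcon
        push_neg at hcon
        have hdisj := h3 his hi₀s hine
        have hxi : x i ≤ x i₀ := hi₀max i his
        set z := (x i₀ + min (y i) (y i₀)) / 2 with hz
        have hz1 : x i₀ < z := by
          have : x i₀ < min (y i) (y i₀) := lt_min hcon hxy₀
          simp only [hz]; linarith
        have hz2 : z < y i := by
          have h' : min (y i) (y i₀) ≤ y i := min_le_left _ _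
          have : x i₀ < min (y i) (y i₀) := lt_min hcon hxy₀
          simp only [hz]; linarith
        have hz3 : z < y i₀ := by
          have h' : min (y i) (y i₀) ≤ y i₀ := min_le_right _ _
          have : x i₀ < min (y i) (y i₀) := lt_min hcon hxy₀
          simp only [hz]; linarith
        have : z ∈ Set.Ioo (x i) (y i) ∩ Set.Ioo (x i₀) (y i₀) :=
          ⟨⟨lt_of_le_of_lt hxi hz1, hz2⟩, ⟨hz1, hz3⟩⟩
        rw [hdisj] at this; exact this
      obtain ⟨m, a, b, hab, hsub, hdisj, hlen, hnorm⟩ :=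
        ih (s.erase i₀) (s.erase_ssubset hi₀s) c (x i₀) hx₀cd.1
          (fun i hi => h1 i (Finset.mem_of_mem_erase hi))
          (fun i hi => fun z hz =>
            ⟨(h2 i (Finset.mem_of_mem_erase hi) hz).1, le_trans hz.2 (hleft i hi)⟩)
          (h3.mono (by exact_mod_cast Finset.coe_subset.2 (Finset.erase_subset _ _)))
      refine ⟨m + 1, Fin.snoc a (y i₀), Fin.snoc b d, ?_, ?_, ?_, ?_, ?_⟩
      · intro j
        refine Fin.lastCases ?_ ?_ j
        · simp [Fin.snoc_last]; exact hy₀cd.2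
        · intro j; simpa [Fin.snoc_castSucc] using hab j
      · intro j
        refine Fin.lastCases ?_ ?_ j
        · simp only [Fin.snoc_last]
          exact fun z hz => ⟨le_trans hy₀cd.1 hz.1, hz.2⟩
        · intro j
          simp only [Fin.snoc_castSucc]
          exact fun z hz => ⟨(hsub j hz).1, le_trans (hsub j hz).2 hx₀cd.2⟩
      · intro i j hij
        rcases Fin.eq_castSucc_or_eq_last i with ⟨i, rfl⟩ | rfl <;>
          rcases Fin.eq_castSucc_or_eq_last j with ⟨j, rfl⟩ | rfl
        all_goals simp only [Fin.snoc_last, Fin.snoc_castSucc]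
        · -- both castSucc
          exact hdisj (fun h => hij (by rw [h]))
        · -- i = castSucc, j = last
          ext z; simp only [Set.mem_inter_iff, Set.mem_Ioo, Set.mem_empty_iff_false, iff_false]
          rintro ⟨hz1, ⟨hz2, _⟩⟩
          have := (hsub i ⟨hz1.1.le, hz1.2.le⟩).2
          linarith [hxy₀.le]
        · -- i = last, j = castSucc j
          ext z; simp only [Set.mem_inter_iff, Set.mem_Ioo, Set.mem_empty_iff_false, iff_false]
          rintro ⟨⟨hz1, _⟩, hz2⟩
          have := (hsub j ⟨hz2.1.le, hz2.2.le⟩).2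
          linarith [hxy₀.le]
        · exact absurd rfl hij
      · rw [Fin.sum_univ_castSucc]
        simp only [Fin.snoc_castSucc, Fin.snoc_last]
        rw [← Finset.add_sum_erase _ _ hi₀s]
        linarith
      · rw [Fin.sum_univ_castSucc]
        simp only [Fin.snoc_castSucc, Fin.snoc_last]
        rw [← Finset.add_sum_erase _ _ hi₀s]
        have t1 : ‖u d - u c‖ ≤ ‖u d - u (y i₀)‖ + ‖u (y i₀) - u (x i₀)‖ + ‖u (x i₀) - u c‖ := by
          have := norm_add₃_le (a := u d - u (y i₀)) (b := u (y i₀) - u (x i₀)) (c := u (x i₀) - u c)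
          simpa using this
        linarith

lemma eq_of_ac_of_deriv_zero {V : Type*} [NormedAddCommGroup V] [NormedSpace ℝ V]
    (u : ℝ → V) (c d : ℝ) (hcd : c ≤ d)
    (hAC : AbsolutelyContinuousOn u (Set.Icc c d))
    (hderiv : ∀ᵐ t ∂(volume.restrict (Set.Ioo c d)), HasDerivAt u 0 t) :
    u d = u c := by
  classical
  rcases eq_or_lt_of_le hcd with rfl | hlt
  · rfl
  have key : ∀ ε > (0:ℝ), ‖u d - u c‖ ≤ ε * (d - c + 1) := by
    intro ε hε
    obtain ⟨δ, hδpos, hδ⟩ := hAC ε hε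
    set E : Set ℝ := {t | t ∈ Set.Ioo c d ∧ HasDerivAt u 0 t} with hE
    have hEnull : volume (Set.Ioo c d \ E) = 0 := by
      have h0 : (volume.restrict (Set.Ioo c d)) {t | ¬ HasDerivAt u 0 t} = 0 := hderiv
      rw [Measure.restrict_apply' measurableSet_Ioo] at h0
      refine measure_mono_null ?_ h0
      intro t ht
      exact ⟨fun h => ht.2 ⟨ht.1, h⟩, ht.1⟩
    -- Vitali covering
    set tfam : Set (ℝ × ℝ) := {q | q.1 ∈ E ∧ 0 < q.2 ∧
        Set.Icc (q.1 - q.2) (q.1 + q.2) ⊆ Set.Icc c d ∧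
        ‖u (q.1 + q.2) - u (q.1 - q.2)‖ ≤ ε * (2 * q.2)} with htfam
    have h30 : (0:ℝ) ≤ 3 := by norm_num
    have hμB : ∀ q ∈ tfam, volume (Metric.closedBall q.1 (3 * q.2)) ≤
        ((3:ℝ≥0) : ℝ≥0∞) * volume (Set.Icc (q.1 - q.2) (q.1 + q.2)) := by
      intro q hq
      rw [Real.closedBall_eq_Icc, Real.volume_Icc, Real.volume_Icc]
      have h3 : ((3:ℝ≥0) : ℝ≥0∞) * ENNReal.ofReal (q.1 + q.2 - (q.1 - q.2))
          = ENNReal.ofReal (3 * (q.1 + q.2 - (q.1 - q.2))) := by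
        rw [ENNReal.ofReal_mul h30]
        norm_num
      rw [h3]
      exact ENNReal.ofReal_le_ofReal (le_of_eq (by ring))
    have hfine : ∀ x ∈ E, ∀ ε' > (0:ℝ), ∃ q ∈ tfam, q.2 ≤ ε' ∧ q.1 = x := by
      intro x hx ε' hε'
      have hx1 : x ∈ Set.Ioo c d := hx.1
      have hdx : HasDerivAt u 0 x := hx.2
      have hlo := (hasDerivAt_iff_isLittleO.1 hdx)
      simp only [smul_zero, sub_zero] at hlo
      have hev := hlo.def hε
      rw [Metric.eventually_nhds_iff] at hev
      obtain ⟨ρ, hρpos, hρ⟩ := hev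
      set r := min ε' (min (ρ/2) (min (x - c) (d - x))) with hr
      have hrpos : 0 < r := by
        apply lt_min hε'
        apply lt_min (by linarith)
        exact lt_min (by linarith [hx1.1]) (by linarith [hx1.2])
      have hrρ : r < ρ := lt_of_le_of_lt (le_trans (min_le_right _ _) (min_le_left _ _)) (by linarith)
      have hrc : r ≤ x - c := le_trans (min_le_right _ _) (le_trans (min_le_right _ _) (min_le_left _ _))
      have hrd : r ≤ d - x := le_trans (min_le_right _ _) (le_trans (min_le_right _ _) (min_le_right _ _))
      refine ⟨(x, r), ⟨hx, hrpos, ?_, ?_⟩, min_le_left _ _, rfl⟩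
      · intro z hz
        simp only [Set.mem_Icc] at hz ⊢
        constructor <;> linarith [hz.1, hz.2]
      · have h1 : ‖u (x + r) - u x‖ ≤ ε * ‖x + r - x‖ := by
          apply hρ; rw [Real.dist_eq]; rw [show x + r - x = r by ring]; rwa [abs_of_pos hrpos]
        have h2 : ‖u (x - r) - u x‖ ≤ ε * ‖x - r - x‖ := by
          apply hρ; rw [Real.dist_eq]; rw [show x - r - x = -r by ring]
          rwa [abs_neg, abs_of_pos hrpos]
        rw [show x + r - x = r by ring] at h1
        rw [show x - r - x = -r by ring] at h2
        rw [Real.norm_eq_abs, abs_of_pos hrpos] at h1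
        rw [Real.norm_eq_abs, abs_neg, abs_of_pos hrpos] at h2
        calc ‖u (x + r) - u (x - r)‖ ≤ ‖u (x + r) - u x‖ + ‖u (x - r) - u x‖ := by
              have := norm_sub_le (u (x + r) - u x) (u (x - r) - u x); simpa using this
          _ ≤ ε * r + ε * r := add_le_add h1 h2
          _ = ε * (2 * r) := by ring
    obtain ⟨fam, hfamsub, hfamcount, hfamdisj, hfamcover⟩ :=
      Vitali.exists_disjoint_covering_ae (volume : Measure ℝ) E tfam 3
        (fun q => q.2) (fun q => q.1) (fun q => Set.Icc (q.1 - q.2) (q.1 + q.2))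
        (fun q _ => by rw [Real.closedBall_eq_Icc]) hμB
        (fun q hq => by
          rw [interior_Icc]
          exact Set.nonempty_Ioo.2 (by linarith [hq.2.1]))
        (fun q _ => isClosed_Icc)
        hfine
    -- measure estimates
    have hmeasB : ∀ q ∈ fam, MeasurableSet (Set.Icc (q.1 - q.2) (q.1 + q.2)) :=
      fun q _ => measurableSet_Icc
    have hUnion : volume (⋃ q ∈ fam, Set.Icc (q.1 - q.2) (q.1 + q.2)) =
        ∑' (q : fam), volume (Set.Icc ((q : ℝ × ℝ).1 - (q : ℝ × ℝ).2) ((q : ℝ × ℝ).1 + (q : ℝ × ℝ).2)) :=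
      measure_biUnion hfamcount hfamdisj hmeasB
    have hIoo : ENNReal.ofReal (d - c) ≤
        ∑' (q : fam), volume (Set.Icc ((q : ℝ × ℝ).1 - (q : ℝ × ℝ).2) ((q : ℝ × ℝ).1 + (q : ℝ × ℝ).2)) := by
      rw [← hUnion]
      have h1 : volume (Set.Ioo c d) ≤
          volume (Set.Ioo c d ∩ ⋃ q ∈ fam, Set.Icc (q.1 - q.2) (q.1 + q.2)) +
          volume (Set.Ioo c d \ ⋃ q ∈ fam, Set.Icc (q.1 - q.2) (q.1 + q.2)) :=
        measure_le_inter_add_diff _ _ _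
      have h2 : volume (Set.Ioo c d \ ⋃ q ∈ fam, Set.Icc (q.1 - q.2) (q.1 + q.2)) = 0 := by
        refine measure_mono_null (fun t ht => ?_) (measure_union_null hEnull hfamcover)
        by_cases htE : t ∈ E
        · exact Or.inr ⟨htE, ht.2⟩
        · exact Or.inl ⟨ht.1, htE⟩
      rw [h2, add_zero] at h1
      calc ENNReal.ofReal (d - c) = volume (Set.Ioo c d) := (Real.volume_Ioo).symm
        _ ≤ _ := le_trans h1 (measure_mono Set.inter_subset_right)
    -- extract finite subfamily
    have hofR : ENNReal.ofReal (d - c - δ/2) < ENNReal.ofReal (d - c) :=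
      (ENNReal.ofReal_lt_ofReal_iff (by linarith)).2 (by linarith)
    have hlt := lt_of_lt_of_le hofR hIoo
    rw [ENNReal.tsum_eq_iSup_sum, lt_iSup_iff] at hlt
    obtain ⟨F, hF⟩ := hlt
    set s₀ : Finset (ℝ × ℝ) := F.image Subtype.val with hs₀
    have hs₀mem : ∀ q ∈ s₀, q ∈ fam := by
      intro q hq
      rw [hs₀, Finset.mem_image] at hq
      obtain ⟨x, _, rfl⟩ := hq
      exact x.2
    have hs₀tfam : ∀ q ∈ s₀, q ∈ tfam := fun q hq => hfamsub (hs₀mem q hq)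
    have hsum_eq : ∑ q ∈ s₀, volume (Set.Icc (q.1 - q.2) (q.1 + q.2)) =
        ∑ x ∈ F, volume (Set.Icc ((x : ℝ × ℝ).1 - (x : ℝ × ℝ).2) ((x : ℝ × ℝ).1 + (x : ℝ × ℝ).2)) := by
      rw [hs₀, Finset.sum_image (fun x _ y _ h => Subtype.val_injective h)]
    have hvol_eq : ∀ q ∈ s₀, volume (Set.Icc (q.1 - q.2) (q.1 + q.2)) =
        ENNReal.ofReal (2 * q.2) := by
      intro q _
      rw [Real.volume_Icc]
      congr 1
      ring
    have hLpos : ∀ q ∈ s₀, (0:ℝ) ≤ 2 * q.2 := fun q hq => by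
      linarith [(hs₀tfam q hq).2.1]
    have hsum_lt : d - c - δ/2 < ∑ q ∈ s₀, 2 * q.2 := by
      have h1 : ENNReal.ofReal (d - c - δ/2) < ENNReal.ofReal (∑ q ∈ s₀, 2 * q.2) := by
        rw [ENNReal.ofReal_sum_of_nonneg hLpos]
        calc ENNReal.ofReal (d - c - δ/2) < _ := hF
          _ = ∑ q ∈ s₀, ENNReal.ofReal (2 * q.2) := by
            rw [← hsum_eq]
            exact Finset.sum_congr rfl hvol_eq
      by_contra hcon
      push_neg at hcon
      exact absurd (ENNReal.ofReal_le_ofReal hcon) (not_le.2 h1)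
    -- apply the chain lemma
    obtain ⟨m, a, b, hab, hsubm, hdisjm, hlen, hnorm⟩ :=
      chain_lemma u (fun q => q.1 - q.2) (fun q => q.1 + q.2) s₀ c d hcd
        (fun q hq => by
          have := (hs₀tfam q hq).2.1
          show q.1 - q.2 < q.1 + q.2
          linarith)
        (fun q hq => (hs₀tfam q hq).2.2.1)
        (by
          intro q hq q' hq' hne
          have hd := hfamdisj (hs₀mem q (by exact_mod_cast hq)) (hs₀mem q' (by exact_mod_cast hq')) hne
          have := hd.mono Set.Ioo_subset_Icc_self Set.Ioo_subset_Icc_self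
          exact Set.disjoint_iff_inter_eq_empty.1 this)
    have hyx : ∑ q ∈ s₀, ((q.1 + q.2) - (q.1 - q.2)) = ∑ q ∈ s₀, 2 * q.2 :=
      Finset.sum_congr rfl (fun q _ => by ring)
    rw [hyx] at hlen
    have hgapsnn : (0:ℝ) ≤ ∑ j, (b j - a j) :=
      Finset.sum_nonneg (fun j _ => by linarith [hab j])
    have hgaps_lt : ∑ j, (b j - a j) < δ := by linarith
    have hACgaps := hδ m a b hab hsubm hdisjm hgaps_lt
    have hIbound : ∑ q ∈ s₀, ‖u (q.1 + q.2) - u (q.1 - q.2)‖ ≤ ε * (d - c) := by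
      calc ∑ q ∈ s₀, ‖u (q.1 + q.2) - u (q.1 - q.2)‖
          ≤ ∑ q ∈ s₀, ε * (2 * q.2) :=
            Finset.sum_le_sum (fun q hq => (hs₀tfam q hq).2.2.2)
        _ = ε * ∑ q ∈ s₀, 2 * q.2 := by rw [Finset.mul_sum]
        _ ≤ ε * (d - c) := by
            apply mul_le_mul_of_nonneg_left _ hε.le
            linarith
    calc ‖u d - u c‖ ≤ (∑ q ∈ s₀, ‖u (q.1 + q.2) - u (q.1 - q.2)‖) + ∑ j, ‖u (b j) - u (a j)‖ :=
          hnorm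
      _ ≤ ε * (d - c) + ε := by linarith
      _ = ε * (d - c + 1) := by ring
  -- conclude from key
  have h0 : ‖u d - u c‖ ≤ 0 := by
    by_contra hcon
    push_neg at hcon
    have hpos : (0:ℝ) < d - c + 1 := by linarith
    have hk := key (‖u d - u c‖ / (2 * (d - c + 1))) (by positivity)
    have heq : ‖u d - u c‖ / (2 * (d - c + 1)) * (d - c + 1) = ‖u d - u c‖ / 2 := by
      field_simp
    rw [heq] at hk
    linarith
  exact sub_eq_zero.1 (norm_le_zero_iff.1 h0)

lemma ae_hasDerivAt_primitive {V : Type*} [NormedAddCommGroup V] [NormedSpace ℝ V]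
    [CompleteSpace V] (g : ℝ → V) (hg : Integrable g (volume : Measure ℝ)) :
    ∀ᵐ x, HasDerivAt (fun y => ∫ t in (0:ℝ)..y, g t) (g x) x := by
  have hloc : LocallyIntegrable g (volume : Measure ℝ) := hg.locallyIntegrable
  filter_upwards [(IsUnifLocDoublingMeasure.vitaliFamily (volume : Measure ℝ)
    1).ae_tendsto_average_norm_sub hloc] with x hx
  set H : ℝ → V := fun y => ∫ t in (0:ℝ)..y, g t with hH
  have hHsub : ∀ p q : ℝ, H q - H p = ∫ t in Set.Ioc p q, g t ∨ True := fun p q => Or.inr trivial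
  have hdiff : ∀ p q : ℝ, p ≤ q → H q - H p = ∫ t in Set.Ioc p q, g t := by
    intro p q hpq
    have h1 := intervalIntegral.integral_add_adjacent_intervals (a := (0:ℝ)) (b := p) (c := q)
      hg.intervalIntegrable hg.intervalIntegrable
    have h2 : H q - H p = ∫ t in p..q, g t := by rw [hH]; simp only; rw [← h1]; abel
    rw [h2, intervalIntegral.integral_of_le hpq]
  -- key bound
  have key : ∀ p q : ℝ, p < q → x ∈ Set.Icc p q →
      ‖(q - p)⁻¹ • (∫ t in Set.Ioc p q, g t) - g x‖ ≤ ⨍ t in Set.Icc p q, ‖g t - g x‖ := by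
    intro p q hpq hxpq
    have hqp : (0:ℝ) < q - p := by linarith
    have hInt : IntegrableOn g (Set.Ioc p q) volume := hg.integrableOn
    have hconst : IntegrableOn (fun _ => g x) (Set.Ioc p q) volume :=
      integrableOn_const (by rw [Real.volume_Ioc]; exact ENNReal.ofReal_ne_top)
    have hIoc : volume (Set.Ioc p q) = ENNReal.ofReal (q - p) := Real.volume_Ioc
    have h1 : (q - p)⁻¹ • (∫ t in Set.Ioc p q, g t) - g x
        = (q - p)⁻¹ • (∫ t in Set.Ioc p q, (g t - g x)) := by
      rw [integral_sub hInt hconst, setIntegral_const, Real.volume_real_Ioc_of_le hpq.le,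
        smul_sub, smul_smul, inv_mul_cancel₀ hqp.ne', one_smul]
    rw [h1, setAverage_eq, Real.volume_real_Icc_of_le hpq.le, norm_smul,
      Real.norm_eq_abs, abs_of_pos (inv_pos.2 hqp), smul_eq_mul]
    rw [← integral_Icc_eq_integral_Ioc]
    exact mul_le_mul_of_nonneg_left (norm_integral_le_integral_norm _) (inv_pos.2 hqp).le
  rw [hasDerivAt_iff_tendsto_slope, ← nhdsLT_sup_nhdsGT, tendsto_sup]
  constructor
  · -- left limit
    have hten := hx.comp (Real.tendsto_Icc_vitaliFamily_left x)
    rw [tendsto_iff_norm_sub_tendsto_zero]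
    apply squeeze_zero' (Eventually.of_forall (fun y => norm_nonneg _))
      (g := fun y => ⨍ t in Set.Icc y x, ‖g t - g x‖) _ hten
    filter_upwards [self_mem_nhdsWithin] with y (hy : y < x)
    have h1 : slope H x y = (x - y)⁻¹ • (∫ t in Set.Ioc y x, g t) := by
      rw [slope_comm, slope_def_module, hdiff y x hy.le]
    rw [h1]
    exact key y x hy ⟨hy.le, le_rfl⟩
  · -- right limit
    have hten := hx.comp (Real.tendsto_Icc_vitaliFamily_right x)
    rw [tendsto_iff_norm_sub_tendsto_zero]
    apply squeeze_zero' (Eventually.of_forall (fun y => norm_nonneg _))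
      (g := fun y => ⨍ t in Set.Icc x y, ‖g t - g x‖) _ hten
    filter_upwards [self_mem_nhdsWithin] with y (hy : x < y)
    have h1 : slope H x y = (y - x)⁻¹ • (∫ t in Set.Ioc x y, g t) := by
      rw [slope_def_module, hdiff x y hy.le]
    rw [h1]
    exact key x y hy ⟨le_rfl, hy.le⟩

section ACBasic
variable {V : Type*} [NormedAddCommGroup V]

lemma AbsolutelyContinuousOn.mono' {f : ℝ → V} {s t : Set ℝ}
    (h : AbsolutelyContinuousOn f s) (hts : t ⊆ s) : AbsolutelyContinuousOn f t := by
  intro ε hε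
  obtain ⟨δ, hδpos, hδ⟩ := h ε hε
  exact ⟨δ, hδpos, fun m a b hab hsub hdisj hsum =>
    hδ m a b hab (fun i => (hsub i).trans hts) hdisj hsum⟩

lemma AbsolutelyContinuousOn.sub' {u v : ℝ → V} {s : Set ℝ}
    (hu : AbsolutelyContinuousOn u s) (hv : AbsolutelyContinuousOn v s) :
    AbsolutelyContinuousOn (fun x => u x - v x) s := by
  intro ε hε
  obtain ⟨δ₁, hδ₁pos, hδ₁⟩ := hu (ε/2) (by linarith)
  obtain ⟨δ₂, hδ₂pos, hδ₂⟩ := hv (ε/2) (by linarith)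
  refine ⟨min δ₁ δ₂, lt_min hδ₁pos hδ₂pos, fun m a b hab hsub hdisj hsum => ?_⟩
  have h1 := hδ₁ m a b hab hsub hdisj (lt_of_lt_of_le hsum (min_le_left _ _))
  have h2 := hδ₂ m a b hab hsub hdisj (lt_of_lt_of_le hsum (min_le_right _ _))
  calc ∑ i, ‖(u (b i) - v (b i)) - (u (a i) - v (a i))‖
      ≤ ∑ i, (‖u (b i) - u (a i)‖ + ‖v (b i) - v (a i)‖) := by
        apply Finset.sum_le_sum
        intro i _
        have : (u (b i) - v (b i)) - (u (a i) - v (a i))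
            = (u (b i) - u (a i)) - (v (b i) - v (a i)) := by abel
        rw [this]
        exact norm_sub_le _ _
    _ = (∑ i, ‖u (b i) - u (a i)‖) + ∑ i, ‖v (b i) - v (a i)‖ := Finset.sum_add_distrib
    _ < ε/2 + ε/2 := add_lt_add h1 h2
    _ = ε := by ring

lemma pairwise_disjoint_Ioc_of_Ioo {m : ℕ} (a b : Fin m → ℝ) (hab : ∀ i, a i ≤ b i)
    (h : Pairwise fun i j => Set.Ioo (a i) (b i) ∩ Set.Ioo (a j) (b j) = ∅) :
    Pairwise (Function.onFun Disjoint (fun i => Set.Ioc (a i) (b i))) := by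
  intro i j hij
  rw [Function.onFun, Set.disjoint_iff_inter_eq_empty]
  ext z
  simp only [Set.mem_inter_iff, Set.mem_Ioc, Set.mem_empty_iff_false, iff_false]
  rintro ⟨⟨h1, h2⟩, h3, h4⟩
  have hmax : max (a i) (a j) < z := max_lt h1 h3
  set w := (max (a i) (a j) + z)/2 with hw
  have hw1 : max (a i) (a j) < w := by rw [hw]; linarith
  have hw2 : w < z := by rw [hw]; linarith
  have : w ∈ Set.Ioo (a i) (b i) ∩ Set.Ioo (a j) (b j) :=
    ⟨⟨lt_of_le_of_lt (le_max_left _ _) hw1, lt_of_lt_of_le hw2 h2⟩,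
     ⟨lt_of_le_of_lt (le_max_right _ _) hw1, lt_of_lt_of_le hw2 h4⟩⟩
  rw [h hij] at this
  exact this

end ACBasic

section Primitive
variable {V : Type*} [NormedAddCommGroup V] [NormedSpace ℝ V] [CompleteSpace V]

lemma primitive_sub_eq {g : ℝ → V} (hg : Integrable g (volume : Measure ℝ)) {p q : ℝ}
    (hpq : p ≤ q) :
    (∫ t in (0:ℝ)..q, g t) - (∫ t in (0:ℝ)..p, g t) = ∫ t in Set.Ioc p q, g t := by
  have h1 := intervalIntegral.integral_add_adjacent_intervals (a := (0:ℝ)) (b := p) (c := q)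
    hg.intervalIntegrable hg.intervalIntegrable
  rw [← intervalIntegral.integral_of_le hpq, ← h1]
  abel

lemma primitive_ac {g : ℝ → V} (hg : Integrable g (volume : Measure ℝ)) (s : Set ℝ) :
    AbsolutelyContinuousOn (fun y => ∫ t in (0:ℝ)..y, g t) s := by
  intro ε hε
  have hfin : ∫⁻ t, ‖g t‖₊ ∂volume ≠ ⊤ := hg.2.ne
  obtain ⟨δ', hδ'pos, hδ'⟩ := exists_pos_setLIntegral_lt_of_measure_lt hfin
    (ε := ENNReal.ofReal ε) (by simp [hε, ne_of_gt])
  obtain ⟨r, hr0, hrδ⟩ := ENNReal.lt_iff_exists_nnreal_btwn.1 hδ'pos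
  have hrpos : (0:ℝ) < (r:ℝ) := by exact_mod_cast hr0
  refine ⟨(r:ℝ), hrpos, fun m a b hab hsub hdisj hsum => ?_⟩
  set U := ⋃ i, Set.Ioc (a i) (b i) with hU
  have hUvol : volume U < δ' := by
    calc volume U ≤ ∑' i, volume (Set.Ioc (a i) (b i)) := measure_iUnion_le _
      _ = ∑ i, ENNReal.ofReal (b i - a i) := by
          rw [tsum_fintype]
          exact Finset.sum_congr rfl (fun i _ => Real.volume_Ioc)
      _ = ENNReal.ofReal (∑ i, (b i - a i)) :=
          (ENNReal.ofReal_sum_of_nonneg (fun i _ => by linarith [hab i])).symm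
      _ < ENNReal.ofReal (r:ℝ) := (ENNReal.ofReal_lt_ofReal_iff hrpos).2 hsum
      _ = (r : ℝ≥0∞) := ENNReal.ofReal_coe_nnreal
      _ < δ' := hrδ
  have hUint := hδ' U hUvol
  have hmeas : ∀ i : Fin m, MeasurableSet (Set.Ioc (a i) (b i)) := fun i => measurableSet_Ioc
  have hdisjIoc := pairwise_disjoint_Ioc_of_Ioo a b hab hdisj
  have hUeq : ∫⁻ t in U, ‖g t‖₊ ∂volume = ∑' i, ∫⁻ t in Set.Ioc (a i) (b i), ‖g t‖₊ ∂volume :=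
    lintegral_iUnion hmeas hdisjIoc _
  -- bound each term
  have hterm : ∀ i : Fin m, ‖(∫ t in (0:ℝ)..(b i), g t) - ∫ t in (0:ℝ)..(a i), g t‖
      ≤ ∫ t in Set.Ioc (a i) (b i), ‖g t‖ := by
    intro i
    rw [primitive_sub_eq hg (hab i)]
    exact norm_integral_le_integral_norm _
  have hofReal : ∀ i : Fin m, ENNReal.ofReal (∫ t in Set.Ioc (a i) (b i), ‖g t‖)
      = ∫⁻ t in Set.Ioc (a i) (b i), ‖g t‖₊ ∂volume := fun i =>
    ofReal_integral_norm_eq_lintegral_enorm hg.integrableOn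
  have hsum_le : ∑ i, ‖(∫ t in (0:ℝ)..(b i), g t) - ∫ t in (0:ℝ)..(a i), g t‖
      ≤ ∑ i, ∫ t in Set.Ioc (a i) (b i), ‖g t‖ := Finset.sum_le_sum (fun i _ => hterm i)
  have hS : ENNReal.ofReal (∑ i, ∫ t in Set.Ioc (a i) (b i), ‖g t‖) < ENNReal.ofReal ε := by
    rw [ENNReal.ofReal_sum_of_nonneg (fun i _ =>
      integral_nonneg (fun t => norm_nonneg _))]
    calc ∑ i, ENNReal.ofReal (∫ t in Set.Ioc (a i) (b i), ‖g t‖)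
        = ∑ i, ∫⁻ t in Set.Ioc (a i) (b i), ‖g t‖₊ ∂volume :=
          Finset.sum_congr rfl (fun i _ => hofReal i)
      _ = ∫⁻ t in U, ‖g t‖₊ ∂volume := by rw [hUeq, tsum_fintype]
      _ < ENNReal.ofReal ε := hUint
  have hSR : (∑ i, ∫ t in Set.Ioc (a i) (b i), ‖g t‖) < ε := by
    have hnn : (0:ℝ) ≤ ∑ i, ∫ t in Set.Ioc (a i) (b i), ‖g t‖ :=
      Finset.sum_nonneg (fun i _ => integral_nonneg (fun t => norm_nonneg _))
    by_contra hcon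
    push_neg at hcon
    exact absurd (ENNReal.ofReal_le_ofReal hcon) (not_le.2 hS)
  calc (∑ i, ‖(fun y => ∫ t in (0:ℝ)..y, g t) (b i) - (fun y => ∫ t in (0:ℝ)..y, g t) (a i)‖)
      = ∑ i, ‖(∫ t in (0:ℝ)..(b i), g t) - ∫ t in (0:ℝ)..(a i), g t‖ := rfl
    _ ≤ _ := hsum_le
    _ < ε := hSR

end Primitive

section BV
variable {V : Type*} [NormedAddCommGroup V] [NormedSpace ℝ V]

lemma ac_eVariationOn_le {u : ℝ → V} {c d p q : ℝ} {δ : ℝ}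
    (hδ : ∀ (m : ℕ) (a b : Fin m → ℝ),
      (∀ i, a i ≤ b i) → (∀ i, Set.Icc (a i) (b i) ⊆ Set.Icc c d) →
      (Pairwise fun i j => Set.Ioo (a i) (b i) ∩ Set.Ioo (a j) (b j) = ∅) →
      (∑ i, (b i - a i)) < δ → (∑ i, ‖u (b i) - u (a i)‖) < 1)
    (hpq : Set.Icc p q ⊆ Set.Icc c d) (hlen : q - p < δ) :
    eVariationOn u (Set.Icc p q) ≤ 1 := by
  apply iSup_le
  rintro ⟨n, w, hwmono, hwmem⟩
  simp only
  have hdist : ∀ i, edist (u (w (i+1))) (u (w i)) = ENNReal.ofReal ‖u (w (i+1)) - u (w i)‖ := by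
    intro i
    rw [edist_dist, dist_eq_norm]
  calc ∑ i ∈ Finset.range n, edist (u (w (i + 1))) (u (w i))
      = ∑ i ∈ Finset.range n, ENNReal.ofReal ‖u (w (i+1)) - u (w i)‖ :=
        Finset.sum_congr rfl (fun i _ => hdist i)
    _ = ENNReal.ofReal (∑ i ∈ Finset.range n, ‖u (w (i+1)) - u (w i)‖) :=
        (ENNReal.ofReal_sum_of_nonneg (fun i _ => norm_nonneg _)).symm
    _ ≤ ENNReal.ofReal 1 := by
        apply ENNReal.ofReal_le_ofReal
        set A : Fin n → ℝ := fun i => w (i:ℕ) with hA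
        set B : Fin n → ℝ := fun i => w ((i:ℕ)+1) with hB
        have hAB : ∀ i, A i ≤ B i := fun i => hwmono (Nat.le_succ _)
        have hsubAB : ∀ i, Set.Icc (A i) (B i) ⊆ Set.Icc c d :=
          fun i z hz => hpq ⟨le_trans (hwmem _).1 hz.1, le_trans hz.2 (hwmem _).2⟩
        have hdisjAB : Pairwise fun i j => Set.Ioo (A i) (B i) ∩ Set.Ioo (A j) (B j) = ∅ := by
          intro i j hij
          rcases lt_or_gt_of_ne hij with hlt | hlt
          · have hle : ((i:ℕ)+1) ≤ (j:ℕ) := Nat.succ_le_of_lt (by exact_mod_cast hlt)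
            ext z
            simp only [Set.mem_inter_iff, Set.mem_Ioo, Set.mem_empty_iff_false, iff_false]
            rintro ⟨⟨_, h2⟩, h3, _⟩
            have := hwmono hle
            simp only [hA, hB] at h2 h3
            linarith
          · have hle : ((j:ℕ)+1) ≤ (i:ℕ) := Nat.succ_le_of_lt (by exact_mod_cast hlt)
            ext z
            simp only [Set.mem_inter_iff, Set.mem_Ioo, Set.mem_empty_iff_false, iff_false]
            rintro ⟨⟨h1, _⟩, _, h4⟩
            have := hwmono hle
            simp only [hA, hB] at h1 h4
            linarith
        have hsumlen : (∑ i, (B i - A i)) < δ := by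
          have heq : (∑ i, (B i - A i)) = w n - w 0 := by
            rw [hA, hB]
            rw [Fin.sum_univ_eq_sum_range (fun i => w (i+1) - w i) n]
            exact Finset.sum_range_sub w n
          rw [heq]
          have h0 : w 0 ∈ Set.Icc p q := hwmem 0
          have hn : w n ∈ Set.Icc p q := hwmem n
          have := h0.1; have := hn.2
          linarith
        have hkey := hδ n A B hAB hsubAB hdisjAB hsumlen
        rw [← Fin.sum_univ_eq_sum_range (fun i => ‖u (w (i+1)) - u (w i)‖) n]
        exact hkey.le
    _ = 1 := ENNReal.ofReal_one

lemma ac_boundedVariationOn {u : ℝ → V} {c d : ℝ} (hcd : c ≤ d)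
    (hAC : AbsolutelyContinuousOn u (Set.Icc c d)) :
    BoundedVariationOn u (Set.Icc c d) := by
  obtain ⟨δ, hδpos, hδ⟩ := hAC 1 one_pos
  -- the truncated endpoints
  set e : ℕ → ℝ := fun k => min d (c + k * (δ/2)) with he
  have he0 : e 0 = c := by simp [he, hcd]
  have hemem : ∀ k, e k ∈ Set.Icc c d := by
    intro k
    constructor
    · apply le_min hcd
      have : (0:ℝ) ≤ k * (δ/2) := by positivity
      linarith
    · exact min_le_left _ _
  have hestep : ∀ k, e (k+1) - e k < δ := by
    intro k
    have h1 : e (k+1) ≤ c + ((k:ℝ)+1) * (δ/2) := by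
      calc e (k+1) ≤ c + ((k+1:ℕ):ℝ) * (δ/2) := min_le_right _ _
        _ = c + ((k:ℝ)+1) * (δ/2) := by push_cast; ring
    have h2 : e k = min d (c + k * (δ/2)) := rfl
    rcases le_or_gt d (c + k * (δ/2)) with hk | hk
    · have : e k = d := by rw [h2, min_eq_left hk]
      have h3 : e (k+1) ≤ d := min_le_left _ _
      rw [this]
      linarith
    · have : e k = c + k * (δ/2) := by rw [h2, min_eq_right hk.le]
      rw [this]
      have : c + (k+1) * (δ/2) - (c + k * (δ/2)) = δ/2 := by ring
      linarith
  have hemono : Monotone e := by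
    apply monotone_nat_of_le_succ
    intro k
    apply le_min (min_le_left _ _)
    have h1 : (k:ℝ) * (δ/2) ≤ (k+1) * (δ/2) := by nlinarith
    calc e k ≤ c + k * (δ/2) := min_le_right _ _
      _ ≤ c + ((k+1:ℕ):ℝ) * (δ/2) := by push_cast; linarith
  have hkey : ∀ k : ℕ, eVariationOn u (Set.Icc c (e k)) ≤ (k : ℝ≥0∞) := by
    intro k
    induction k with
    | zero =>
        rw [he0]
        simp [eVariationOn.subsingleton u (Set.subsingleton_Icc_of_ge le_rfl)]
    | succ k ih =>
        have hsplit := eVariationOn.Icc_add_Icc u (s := Set.Icc c d)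
          (hemem k).1 (hemono (Nat.le_succ k)) (hemem k)
        have hl : Set.Icc c d ∩ Set.Icc c (e k) = Set.Icc c (e k) :=
          Set.inter_eq_self_of_subset_right (Set.Icc_subset_Icc le_rfl (hemem k).2)
        have hm : Set.Icc c d ∩ Set.Icc (e k) (e (k+1)) = Set.Icc (e k) (e (k+1)) :=
          Set.inter_eq_self_of_subset_right
            (Set.Icc_subset_Icc (hemem k).1 (hemem (k+1)).2)
        have hr : Set.Icc c d ∩ Set.Icc c (e (k+1)) = Set.Icc c (e (k+1)) :=
          Set.inter_eq_self_of_subset_right (Set.Icc_subset_Icc le_rfl (hemem (k+1)).2)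
        rw [hl, hm, hr] at hsplit
        have hsmall : eVariationOn u (Set.Icc (e k) (e (k+1))) ≤ 1 :=
          ac_eVariationOn_le hδ
            (Set.Icc_subset_Icc (hemem k).1 (hemem (k+1)).2) (by linarith [hestep k])
        calc eVariationOn u (Set.Icc c (e (k+1)))
            = eVariationOn u (Set.Icc c (e k)) + eVariationOn u (Set.Icc (e k) (e (k+1))) :=
              hsplit.symm
          _ ≤ (k : ℝ≥0∞) + 1 := add_le_add ih hsmall
          _ = ((k+1 : ℕ) : ℝ≥0∞) := by push_cast; ring
  -- choose k large enough
  obtain ⟨k, hk⟩ := exists_nat_ge ((d - c) / (δ/2))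
  have hek : e k = d := by
    rw [he]
    apply min_eq_left
    have h1 : (d - c) ≤ k * (δ/2) := by
      rw [div_le_iff₀ (by linarith)] at hk
      linarith
    linarith
  have := hkey k
  rw [hek] at this
  exact ne_top_of_le_ne_top (by simp) this

lemma ac_ae_differentiableAt {V : Type*} [NormedAddCommGroup V] [NormedSpace ℝ V]
    [FiniteDimensional ℝ V] {u : ℝ → V} {c d : ℝ} (hcd : c ≤ d)
    (hAC : AbsolutelyContinuousOn u (Set.Icc c d)) :
    ∀ᵐ x ∂(volume.restrict (Set.Ioo c d)), DifferentiableAt ℝ u x := by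
  have hBV : BoundedVariationOn u (Set.Icc c d) := ac_boundedVariationOn hcd hAC
  have h1 : ∀ᵐ x ∂(volume.restrict (Set.Icc c d)), DifferentiableWithinAt ℝ u (Set.Icc c d) x :=
    hBV.locallyBoundedVariationOn.ae_differentiableWithinAt measurableSet_Icc
  have h2 : ∀ᵐ x ∂(volume.restrict (Set.Ioo c d)), DifferentiableWithinAt ℝ u (Set.Icc c d) x :=
    ae_restrict_of_ae_restrict_of_subset Set.Ioo_subset_Icc_self h1
  filter_upwards [h2, ae_restrict_mem measurableSet_Ioo] with x hx hxmem
  exact hx.differentiableAt (Icc_mem_nhds hxmem.1 hxmem.2)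

end BV

section FTC

lemma ftc_ac {V : Type*} [NormedAddCommGroup V] [NormedSpace ℝ V] [FiniteDimensional ℝ V]
    (u : ℝ → V) (c d : ℝ) (hcd : c ≤ d)
    (hAC : AbsolutelyContinuousOn u (Set.Icc c d))
    (hint : IntegrableOn (deriv u) (Set.Ioo c d) volume) :
    u d - u c = ∫ t in Set.Ioo c d, deriv u t := by
  have : CompleteSpace V := FiniteDimensional.complete ℝ V
  set g : ℝ → V := (Set.Ioo c d).indicator (deriv u) with hg
  have hgInt : Integrable g (volume : Measure ℝ) :=
    (integrable_indicator_iff measurableSet_Ioo).2 hint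
  set H : ℝ → V := fun y => ∫ t in (0:ℝ)..y, g t with hH
  have hprim := ae_hasDerivAt_primitive g hgInt
  have hdiffae := ac_ae_differentiableAt hcd hAC
  have hw0 : ∀ᵐ x ∂(volume.restrict (Set.Ioo c d)), HasDerivAt (fun t => u t - H t) 0 x := by
    filter_upwards [hdiffae, ae_restrict_of_ae hprim, ae_restrict_mem measurableSet_Ioo]
      with x h1 h2 hx
    have hu' : HasDerivAt u (deriv u x) x := h1.hasDerivAt
    have hgx : g x = deriv u x := Set.indicator_of_mem hx _
    have := hu'.sub h2
    rw [hgx, sub_self] at this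
    exact this
  have hwAC : AbsolutelyContinuousOn (fun t => u t - H t) (Set.Icc c d) :=
    hAC.sub' (primitive_ac hgInt _)
  have hwc := eq_of_ac_of_deriv_zero (fun t => u t - H t) c d hcd hwAC hw0
  have hHd : H d - H c = ∫ t in Set.Ioo c d, deriv u t := by
    rw [hH]
    simp only
    rw [primitive_sub_eq hgInt hcd, hg, setIntegral_indicator measurableSet_Ioo,
      Set.inter_eq_self_of_subset_right Set.Ioo_subset_Ioc_self]
  have hfinal : u d - u c = H d - H c := by
    rw [sub_eq_sub_iff_sub_eq_sub]
    exact hwc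
  rw [hfinal, hHd]

end FTC

lemma open_preconnected_eq_Ioo {s : Set ℝ} (hs : IsOpen s) (hconn : IsPreconnected s)
    (hbdd : Bornology.IsBounded s) (hne : s.Nonempty) :
    s = Set.Ioo (sInf s) (sSup s) ∧ sInf s < sSup s := by
  have hba : BddAbove s := hbdd.bddAbove
  have hbb : BddBelow s := hbdd.bddBelow
  have hord : OrdConnected s := hconn.ordConnected
  have hsub : s ⊆ Set.Ioo (sInf s) (sSup s) := by
    intro x hx
    obtain ⟨ε, hεpos, hball⟩ := Metric.isOpen_iff.1 hs x hx
    have hl : x - ε/2 ∈ s := hball (by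
      rw [Metric.mem_ball, Real.dist_eq, show x - ε/2 - x = -(ε/2) by ring, abs_neg,
        abs_of_pos (by linarith)]
      linarith)
    have hr : x + ε/2 ∈ s := hball (by rw [Metric.mem_ball, Real.dist_eq, show x + ε/2 - x = ε/2 by ring, abs_of_pos (by linarith)]; linarith)
    exact ⟨lt_of_le_of_lt (csInf_le hbb hl) (by linarith),
      lt_of_lt_of_le (by linarith : x < x + ε/2) (le_csSup hba hr)⟩
  have hsup : Set.Ioo (sInf s) (sSup s) ⊆ s := by
    intro z hz
    obtain ⟨a, has, haz⟩ := exists_lt_of_csInf_lt hne hz.1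
    obtain ⟨b, hbs, hzb⟩ := exists_lt_of_lt_csSup hne hz.2
    exact hord.out has hbs ⟨haz.le, hzb.le⟩
  refine ⟨Set.Subset.antisymm hsub hsup, ?_⟩
  obtain ⟨x, hx⟩ := hne
  have := hsub hx
  exact lt_trans this.1 this.2

lemma setIntegral_open_eq_zero_of_components {V : Type*} [NormedAddCommGroup V]
    [NormedSpace ℝ V] (U : Set ℝ) (hU : IsOpen U) (hbdd : Bornology.IsBounded U)
    (F : ℝ → V) (hF : IntegrableOn F U volume)
    (h0 : ∀ a b : ℝ, a < b → Set.Ioo a b ⊆ U → a ∉ U → b ∉ U →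
      ∫ t in Set.Ioo a b, F t ∂volume = 0) :
    ∫ t in U, F t ∂volume = 0 := by
  classical
  set 𝒞 : Set (Set ℝ) := (fun x => connectedComponentIn U x) '' U with h𝒞
  have hmem : ∀ C ∈ 𝒞, ∀ x ∈ C, connectedComponentIn U x = C := by
    rintro C ⟨y, hy, rfl⟩ x hx
    show connectedComponentIn U x = connectedComponentIn U y
    exact (connectedComponentIn_eq (show x ∈ connectedComponentIn U y from hx)).symm
  have hCsubU : ∀ C ∈ 𝒞, C ⊆ U := by
    rintro C ⟨y, hy, rfl⟩
    exact connectedComponentIn_subset U y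
  have hCopen : ∀ C ∈ 𝒞, IsOpen C := by
    rintro C ⟨y, hy, rfl⟩
    exact hU.connectedComponentIn
  have hCne : ∀ C ∈ 𝒞, C.Nonempty := by
    rintro C ⟨y, hy, rfl⟩
    exact ⟨y, mem_connectedComponentIn hy⟩
  have hCconn : ∀ C ∈ 𝒞, IsPreconnected C := by
    rintro C ⟨y, hy, rfl⟩
    exact isPreconnected_connectedComponentIn
  have hdisj : 𝒞.PairwiseDisjoint id := by
    rintro C hC D hD hne
    rw [Function.onFun, Set.disjoint_iff_inter_eq_empty]
    by_contra hcon
    obtain ⟨z, hzC, hzD⟩ := Set.nonempty_iff_ne_empty.2 hcon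
    exact hne (((hmem C hC z hzC).symm).trans (hmem D hD z hzD))
  have hcount : 𝒞.Countable :=
    hdisj.countable_of_isOpen (fun C hC => hCopen C hC) (fun C hC => hCne C hC)
  have : Countable ↥𝒞 := hcount.to_subtype
  have hUeq : U = ⋃ (C : ↥𝒞), (C : Set ℝ) := by
    apply Set.Subset.antisymm
    · intro x hx
      exact Set.mem_iUnion.2 ⟨⟨connectedComponentIn U x, ⟨x, hx, rfl⟩⟩,
        mem_connectedComponentIn hx⟩
    · exact Set.iUnion_subset (fun C => hCsubU C C.2)
  have hintU : IntegrableOn F (⋃ (C : ↥𝒞), (C : Set ℝ)) volume := hUeq ▸ hF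
  have hcomp0 : ∀ C : ↥𝒞, ∫ t in (C : Set ℝ), F t ∂volume = 0 := by
    rintro ⟨C, hC⟩
    show ∫ t in C, F t ∂volume = 0
    have hCb : Bornology.IsBounded C := hbdd.subset (hCsubU C hC)
    obtain ⟨a, b, hCeq, hCab⟩ : ∃ a b, C = Set.Ioo a b ∧ a < b := by
      obtain ⟨h1, h2⟩ := open_preconnected_eq_Ioo (hCopen C hC) (hCconn C hC) hCb (hCne C hC)
      exact ⟨_, _, h1, h2⟩
    -- endpoints are not in U
    have henda : a ∉ U := by
      intro hcon
      obtain ⟨ε, hεpos, hball⟩ := Metric.isOpen_iff.1 hU a hcon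
      set η := min (ε/2) ((b - a)/2) with hη
      have hηpos : 0 < η := lt_min (by linarith) (by linarith)
      have hηε : η < ε := lt_of_le_of_lt (min_le_left _ _) (by linarith)
      have hηab : η ≤ (b - a)/2 := min_le_right _ _
      have htsub : Set.Ioo (a - η) b ⊆ U := by
        intro z hz
        rcases le_or_gt z (a + η) with hzle | hzgt
        · apply hball
          rw [Metric.mem_ball, Real.dist_eq]
          exact lt_of_le_of_lt (abs_le.2 ⟨by linarith [hz.1], by linarith⟩) hηε
        · exact (hCeq ▸ hCsubU C hC) (show z ∈ Set.Ioo a b from ⟨by linarith, hz.2⟩)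
      have hmid : (a + b)/2 ∈ C := hCeq ▸ (⟨by linarith, by linarith⟩ : (a+b)/2 ∈ Set.Ioo a b)
      have htC : Set.Ioo (a - η) b ⊆ C := by
        have h1 : Set.Ioo (a - η) b ⊆ connectedComponentIn U ((a+b)/2) :=
          isPreconnected_Ioo.subset_connectedComponentIn
            (⟨by linarith, by linarith⟩ : (a+b)/2 ∈ Set.Ioo (a - η) b) htsub
        rwa [hmem C hC _ hmid] at h1
      have : a - η/2 ∈ C := htC ⟨by linarith, by linarith⟩
      rw [hCeq] at this
      exact absurd this.1 (by linarith)
    have hendb : b ∉ U := by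
      intro hcon
      obtain ⟨ε, hεpos, hball⟩ := Metric.isOpen_iff.1 hU b hcon
      set η := min (ε/2) ((b - a)/2) with hη
      have hηpos : 0 < η := lt_min (by linarith) (by linarith)
      have hηε : η < ε := lt_of_le_of_lt (min_le_left _ _) (by linarith)
      have hηab : η ≤ (b - a)/2 := min_le_right _ _
      have htsub : Set.Ioo a (b + η) ⊆ U := by
        intro z hz
        rcases lt_or_ge z (b - η) with hzlt | hzge
        · exact (hCeq ▸ hCsubU C hC) (show z ∈ Set.Ioo a b from ⟨hz.1, by linarith⟩)
        · apply hball
          rw [Metric.mem_ball, Real.dist_eq]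
          exact lt_of_le_of_lt (abs_le.2 ⟨by linarith, by linarith [hz.2]⟩) hηε
      have hmid : (a + b)/2 ∈ C := hCeq ▸ (⟨by linarith, by linarith⟩ : (a+b)/2 ∈ Set.Ioo a b)
      have htC : Set.Ioo a (b + η) ⊆ C := by
        have h1 : Set.Ioo a (b + η) ⊆ connectedComponentIn U ((a+b)/2) :=
          isPreconnected_Ioo.subset_connectedComponentIn
            (⟨by linarith, by linarith⟩ : (a+b)/2 ∈ Set.Ioo a (b + η)) htsub
        rwa [hmem C hC _ hmid] at h1
      have : b + η/2 ∈ C := htC ⟨by linarith, by linarith⟩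
      rw [hCeq] at this
      exact absurd this.2 (by linarith)
    rw [hCeq]
    exact h0 a b hCab (hCeq ▸ hCsubU C hC) henda hendb
  calc ∫ t in U, F t ∂volume = ∫ t in ⋃ (C : ↥𝒞), (C : Set ℝ), F t ∂volume := by rw [← hUeq]
    _ = ∑' (C : ↥𝒞), ∫ t in (C : Set ℝ), F t ∂volume := by
        have hmeas' : ∀ C : ↥𝒞, MeasurableSet ((C : Set ℝ)) :=
          fun C => (hCopen C.1 C.2).measurableSet
        have hdisj' : Pairwise (Function.onFun Disjoint (fun C : ↥𝒞 => (C : Set ℝ))) := by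
          intro C D hne
          have hne' : (C : Set ℝ) ≠ (D : Set ℝ) := fun h => hne (Subtype.coe_injective h)
          exact hdisj C.2 D.2 hne'
        exact integral_iUnion hmeas' hdisj' hintU
    _ = 0 := by simp [hcomp0]

lemma AbsolutelyContinuousOn.smul_left {V : Type*} [NormedAddCommGroup V] [NormedSpace ℝ V]
    {φ : ℝ → ℝ} {f : ℝ → V} {s : Set ℝ}
    (hf : AbsolutelyContinuousOn f s) {Mφ Lφ Mf : ℝ}
    (hMφnn : 0 ≤ Mφ) (hLφnn : 0 ≤ Lφ) (hMfnn : 0 ≤ Mf)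
    (hMφ : ∀ x ∈ s, |φ x| ≤ Mφ)
    (hLφ : ∀ x ∈ s, ∀ y ∈ s, |φ x - φ y| ≤ Lφ * |x - y|)
    (hMf : ∀ x ∈ s, ‖f x‖ ≤ Mf) :
    AbsolutelyContinuousOn (fun t => φ t • f t) s := by
  intro ε hε
  obtain ⟨δ₁, hδ₁pos, hδ₁⟩ := hf (ε/(2*(Mφ+1))) (by positivity)
  refine ⟨min δ₁ (ε/(2*(Lφ*Mf+1))), lt_min hδ₁pos (by positivity), ?_⟩
  intro m a b hab hsub hdisj hsum
  have hmem : ∀ i, a i ∈ s ∧ b i ∈ s := fun i => ⟨hsub i ⟨le_rfl, hab i⟩, hsub i ⟨hab i, le_rfl⟩⟩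
  have hterm : ∀ i, ‖φ (b i) • f (b i) - φ (a i) • f (a i)‖ ≤
      Mφ * ‖f (b i) - f (a i)‖ + (Lφ * Mf) * (b i - a i) := by
    intro i
    have heq : φ (b i) • f (b i) - φ (a i) • f (a i)
        = φ (b i) • (f (b i) - f (a i)) + (φ (b i) - φ (a i)) • f (a i) := by
      rw [smul_sub, sub_smul]; abel
    rw [heq]
    have h1 : ‖φ (b i) • (f (b i) - f (a i))‖ ≤ Mφ * ‖f (b i) - f (a i)‖ := by
      rw [norm_smul, Real.norm_eq_abs]
      exact mul_le_mul_of_nonneg_right (hMφ _ (hmem i).2) (norm_nonneg _)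
    have h2 : ‖(φ (b i) - φ (a i)) • f (a i)‖ ≤ (Lφ * Mf) * (b i - a i) := by
      rw [norm_smul, Real.norm_eq_abs]
      have hφd : |φ (b i) - φ (a i)| ≤ Lφ * (b i - a i) := by
        have := hLφ (b i) (hmem i).2 (a i) (hmem i).1
        rwa [abs_of_nonneg (by linarith [hab i] : (0:ℝ) ≤ b i - a i)] at this
      calc |φ (b i) - φ (a i)| * ‖f (a i)‖ ≤ (Lφ * (b i - a i)) * Mf :=
            mul_le_mul hφd (hMf _ (hmem i).1) (norm_nonneg _)
              (mul_nonneg hLφnn (by linarith [hab i]))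
        _ = (Lφ * Mf) * (b i - a i) := by ring
    calc ‖φ (b i) • (f (b i) - f (a i)) + (φ (b i) - φ (a i)) • f (a i)‖
        ≤ ‖φ (b i) • (f (b i) - f (a i))‖ + ‖(φ (b i) - φ (a i)) • f (a i)‖ := norm_add_le _ _
      _ ≤ _ := add_le_add h1 h2
  have hS1 : (∑ i, ‖f (b i) - f (a i)‖) < ε/(2*(Mφ+1)) :=
    hδ₁ m a b hab hsub hdisj (lt_of_lt_of_le hsum (min_le_left _ _))
  have hS2 : (∑ i, (b i - a i)) < ε/(2*(Lφ*Mf+1)) := lt_of_lt_of_le hsum (min_le_right _ _)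
  have hS1nn : 0 ≤ ∑ i, ‖f (b i) - f (a i)‖ := Finset.sum_nonneg fun i _ => norm_nonneg _
  have h1 : Mφ * (∑ i, ‖f (b i) - f (a i)‖) ≤ Mφ * (ε/(2*(Mφ+1))) :=
    mul_le_mul_of_nonneg_left hS1.le hMφnn
  have h2 : (Lφ*Mf) * (∑ i, (b i - a i)) ≤ (Lφ*Mf) * (ε/(2*(Lφ*Mf+1))) :=
    mul_le_mul_of_nonneg_left hS2.le (by positivity)
  have h3 : Mφ * (ε/(2*(Mφ+1))) < ε/2 := by
    rw [← mul_div_assoc, div_lt_div_iff₀ (by positivity) (by norm_num)]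
    nlinarith
  have h4 : (Lφ*Mf) * (ε/(2*(Lφ*Mf+1))) < ε/2 := by
    rw [← mul_div_assoc, div_lt_div_iff₀ (by positivity) (by norm_num)]
    nlinarith [mul_nonneg hLφnn hMfnn]
  calc ∑ i, ‖φ (b i) • f (b i) - φ (a i) • f (a i)‖
      ≤ ∑ i, (Mφ * ‖f (b i) - f (a i)‖ + (Lφ * Mf) * (b i - a i)) :=
        Finset.sum_le_sum (fun i _ => hterm i)
    _ = Mφ * (∑ i, ‖f (b i) - f (a i)‖) + (Lφ * Mf) * ∑ i, (b i - a i) := by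
        rw [Finset.sum_add_distrib, Finset.mul_sum, Finset.mul_sum]
    _ < ε := by linarith

lemma integral_Ioo_deriv_eq_zero {V : Type*} [NormedAddCommGroup V] [NormedSpace ℝ V]
    [FiniteDimensional ℝ V]
    (h : ℝ → V) {a b : ℝ} (hab : a < b) (hcont : Continuous h) (ha : h a = 0) (hb : h b = 0)
    (hACh : ∀ c d : ℝ, a < c → c ≤ d → d < b → AbsolutelyContinuousOn h (Set.Icc c d))
    (hint : IntegrableOn (deriv h) (Set.Ioo a b) volume) :
    ∫ t in Set.Ioo a b, deriv h t = 0 := by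
  set cn : ℕ → ℝ := fun n => a + (b - a)/((n:ℝ)+2) with hcn
  set dn : ℕ → ℝ := fun n => b - (b - a)/((n:ℝ)+2) with hdn
  have hpos : ∀ n : ℕ, 0 < (b - a)/((n:ℝ)+2) := fun n => div_pos (by linarith) (by positivity)
  have hhalf : ∀ n : ℕ, (b - a)/((n:ℝ)+2) ≤ (b - a)/2 := fun n =>
    div_le_div_of_nonneg_left (by linarith) (by norm_num) (by push_cast; linarith [Nat.cast_nonneg (α := ℝ) n])
  have hacn : ∀ n, a < cn n := fun n => by simp only [hcn]; linarith [hpos n]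
  have hdnb : ∀ n, dn n < b := fun n => by simp only [hdn]; linarith [hpos n]
  have hcd : ∀ n, cn n ≤ dn n := fun n => by
    simp only [hcn, hdn]; linarith [hhalf n]
  have hsubn : ∀ n, Set.Ioo (cn n) (dn n) ⊆ Set.Ioo a b := fun n =>
    Set.Ioo_subset_Ioo (hacn n).le (hdnb n).le
  have hFTC : ∀ n, h (dn n) - h (cn n) = ∫ t in Set.Ioo (cn n) (dn n), deriv h t := fun n =>
    ftc_ac h (cn n) (dn n) (hcd n) (hACh _ _ (hacn n) (hcd n) (hdnb n)) (hint.mono_set (hsubn n))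
  -- the sequences converge
  have hq : Tendsto (fun n : ℕ => (b - a)/((n:ℝ)+2)) atTop (𝓝 0) :=
    Tendsto.div_atTop tendsto_const_nhds
      (tendsto_atTop_add_const_right atTop 2 tendsto_natCast_atTop_atTop)
  have hctend : Tendsto cn atTop (𝓝 a) := by
    have := hq.const_add a
    simpa using this
  have hdtend : Tendsto dn atTop (𝓝 b) := by
    have := hq.const_sub b
    simpa using this
  have T1 : Tendsto (fun n => h (dn n) - h (cn n)) atTop (𝓝 0) := by
    have h1 : Tendsto (fun n => h (dn n)) atTop (𝓝 (h b)) :=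
      (hcont.tendsto b).comp hdtend
    have h2 : Tendsto (fun n => h (cn n)) atTop (𝓝 (h a)) :=
      (hcont.tendsto a).comp hctend
    have := h1.sub h2
    rw [ha, hb, sub_zero] at this
    exact this
  have hrw : ∀ n, ∫ t in Set.Ioo (cn n) (dn n), deriv h t
      = ∫ t in Set.Ioo a b, (Set.Ioo (cn n) (dn n)).indicator (deriv h) t := by
    intro n
    rw [setIntegral_indicator measurableSet_Ioo,
      Set.inter_eq_self_of_subset_right (hsubn n)]
  have T2 : Tendsto (fun n => ∫ t in Set.Ioo a b, (Set.Ioo (cn n) (dn n)).indicator (deriv h) t)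
      atTop (𝓝 (∫ t in Set.Ioo a b, deriv h t)) := by
    apply tendsto_integral_of_dominated_convergence (fun t => ‖deriv h t‖)
      (fun n => hint.1.indicator measurableSet_Ioo)
      hint.norm
      (fun n => Eventually.of_forall (fun t => norm_indicator_le_norm_self _ _))
    · filter_upwards [ae_restrict_mem measurableSet_Ioo] with t ht
      have hev1 : ∀ᶠ n in atTop, cn n < t := hctend.eventually_lt_const ht.1
      have hev2 : ∀ᶠ n in atTop, t < dn n := hdtend.eventually_const_lt ht.2
      apply Tendsto.congr' _ tendsto_const_nhds
      filter_upwards [hev1, hev2] with n h1 h2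
      have hmem : t ∈ Set.Ioo (cn n) (dn n) := ⟨h1, h2⟩
      rw [Set.indicator_of_mem hmem]
  have T2' : Tendsto (fun n => h (dn n) - h (cn n)) atTop (𝓝 (∫ t in Set.Ioo a b, deriv h t)) := by
    apply T2.congr
    intro n
    rw [← hrw n, ← hFTC n]
  exact tendsto_nhds_unique T2' T1

end AuxiliaryLemmas

/-- **Extension lemma.**
Let `V` be a finite-dimensional complex vector space, `Ω ⊆ ℝ` open and bounded,
`f : Ω → V` continuous, `p ≥ 1`, and `Ω₀ = {t ∈ Ω : f t ≠ 0}`.  If `f` is locally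
absolutely continuous on `Ω₀` and its pointwise derivative belongs to `L^p(Ω₀, V)`, then
the distributional derivative of `f` on `Ω` is (represented by) a function
`g ∈ L^p(Ω, V)` with `‖g‖_{L^p(Ω)} = ‖f|_{Ω₀}′‖_{L^p(Ω₀)}`. -/
theorem extension_lemma
    {V : Type} [NormedAddCommGroup V] [NormedSpace ℂ V] [FiniteDimensional ℂ V]
    (Ω : Set ℝ) (hΩopen : IsOpen Ω) (hΩbdd : Bornology.IsBounded Ω)
    (f : ℝ → V) (hf : ContinuousOn f Ω)
    (p : ℝ) (hp : 1 ≤ p)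
    (Ω₀ : Set ℝ) (hΩ₀ : Ω₀ = {t ∈ Ω | f t ≠ 0})
    (hAC : ∀ a b : ℝ, a ≤ b → Set.Icc a b ⊆ Ω₀ → AbsolutelyContinuousOn f (Set.Icc a b))
    (hLp : MemLp (deriv f) (ENNReal.ofReal p) (volume.restrict Ω₀)) :
    ∃ g : ℝ → V,
      MemLp g (ENNReal.ofReal p) (volume.restrict Ω) ∧
      (∀ φ : ℝ → ℝ, ContDiff ℝ (⊤ : ℕ∞) φ → HasCompactSupport φ → tsupport φ ⊆ Ω →
        ∫ t in Ω, deriv φ t • f t = - ∫ t in Ω, φ t • g t) ∧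
      eLpNorm g (ENNReal.ofReal p) (volume.restrict Ω) =
        eLpNorm (deriv f) (ENNReal.ofReal p) (volume.restrict Ω₀) := by
  classical
  -- basic setup
  have hΩmeas : MeasurableSet Ω := hΩopen.measurableSet
  have hΩ₀open : IsOpen Ω₀ := by
    rw [hΩ₀]
    have hrw : {t ∈ Ω | f t ≠ 0} = Ω ∩ f ⁻¹' ({0}ᶜ) := by
      ext t
      simp [Set.mem_setOf_eq, Set.mem_inter_iff, Set.mem_preimage]
    rw [hrw]
    exact hf.isOpen_inter_preimage hΩopen (isOpen_compl_iff.2 isClosed_singleton)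
  have hΩ₀meas : MeasurableSet Ω₀ := hΩ₀open.measurableSet
  have hΩ₀sub : Ω₀ ⊆ Ω := by rw [hΩ₀]; exact fun t ht => ht.1
  have hΩ₀bdd : Bornology.IsBounded Ω₀ := hΩbdd.subset hΩ₀sub
  haveI hfinΩ : IsFiniteMeasure (volume.restrict Ω) :=
    ⟨by rw [Measure.restrict_apply_univ]; exact hΩbdd.measure_lt_top⟩
  haveI hfinΩ₀ : IsFiniteMeasure (volume.restrict Ω₀) :=
    ⟨by rw [Measure.restrict_apply_univ]; exact hΩ₀bdd.measure_lt_top⟩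
  have hp' : (1:ℝ≥0∞) ≤ ENNReal.ofReal p := by
    rw [show (1:ℝ≥0∞) = ENNReal.ofReal 1 by simp]
    exact ENNReal.ofReal_le_ofReal hp
  have hrr : (volume.restrict Ω).restrict Ω₀ = volume.restrict Ω₀ := by
    rw [Measure.restrict_restrict hΩ₀meas, Set.inter_eq_self_of_subset_left hΩ₀sub]
  set g : ℝ → V := Ω₀.indicator (deriv f) with hgdef
  have hgmemLp : MemLp g (ENNReal.ofReal p) (volume.restrict Ω) := by
    constructor
    · rw [hgdef, aestronglyMeasurable_indicator_iff hΩ₀meas, hrr]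
      exact hLp.1
    · rw [hgdef, eLpNorm_indicator_eq_eLpNorm_restrict hΩ₀meas, hrr]
      exact hLp.2
  have hnormeq : eLpNorm g (ENNReal.ofReal p) (volume.restrict Ω)
      = eLpNorm (deriv f) (ENNReal.ofReal p) (volume.restrict Ω₀) := by
    rw [hgdef, eLpNorm_indicator_eq_eLpNorm_restrict hΩ₀meas, hrr]
  refine ⟨g, hgmemLp, ?_, hnormeq⟩
  -- the distributional identity
  intro φ hφC hφsupp hφsub
  have hKcomp : IsCompact (tsupport φ) := hφsupp
  have hKΩ : tsupport φ ⊆ Ω := hφsub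
  have hφcont : Continuous φ := hφC.continuous
  have h1top : (1:ℕ∞) ≤ (⊤:ℕ∞) := le_top
  have hφdiff : ∀ x, HasDerivAt φ (deriv φ x) x := fun x =>
    ((hφC.differentiable (by simp)) x).hasDerivAt
  have hφ'cont : Continuous (deriv φ) := hφC.continuous_deriv (by exact_mod_cast h1top)
  obtain ⟨M2, hM2⟩ := hKcomp.exists_bound_of_continuousOn hφcont.continuousOn
  obtain ⟨M1, hM1⟩ := hKcomp.exists_bound_of_continuousOn hφ'cont.continuousOn
  obtain ⟨MK, hMK⟩ := hKcomp.exists_bound_of_continuousOn (hf.mono hKΩ)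
  have hφzero : ∀ x, x ∉ tsupport φ → φ x = 0 := fun x hx =>
    image_eq_zero_of_notMem_tsupport hx
  have hφ'zero : ∀ x, x ∉ tsupport φ → deriv φ x = 0 := fun x hx =>
    Function.notMem_support.1 (fun hs => hx (support_deriv_subset hs))
  have hφbd : ∀ x, |φ x| ≤ max M2 0 := by
    intro x
    by_cases hx : x ∈ tsupport φ
    · exact le_trans (by simpa [Real.norm_eq_abs] using hM2 x hx) (le_max_left _ _)
    · rw [hφzero x hx, abs_zero]; exact le_max_right _ _
  have hφ'bd : ∀ x, |deriv φ x| ≤ max M1 0 := by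
    intro x
    by_cases hx : x ∈ tsupport φ
    · exact le_trans (by simpa [Real.norm_eq_abs] using hM1 x hx) (le_max_left _ _)
    · rw [hφ'zero x hx, abs_zero]; exact le_max_right _ _
  have hφlip : ∀ x y : ℝ, |φ x - φ y| ≤ max M1 0 * |x - y| := by
    intro x y
    have := Convex.norm_image_sub_le_of_norm_deriv_le
      (f := φ) (s := Set.univ)
      (fun z _ => (hφdiff z).differentiableAt)
      (fun z _ => (show ‖deriv φ z‖ ≤ max M1 0 by rw [Real.norm_eq_abs]; exact hφ'bd z))
      convex_univ (Set.mem_univ y) (Set.mem_univ x)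
    simpa [Real.norm_eq_abs] using this
  set h : ℝ → V := fun t => φ t • f t with hhdef
  have hhcont : Continuous h := by
    rw [continuous_iff_continuousAt]
    intro x
    by_cases hx : x ∈ Ω
    · exact (hφcont.continuousAt).smul (hf.continuousAt (hΩopen.mem_nhds hx))
    · have hxK : x ∉ tsupport φ := fun hK' => hx (hKΩ hK')
      have hev : h =ᶠ[𝓝 x] (fun _ => (0:V)) := by
        filter_upwards [(isClosed_tsupport φ).isOpen_compl.mem_nhds hxK] with y hy
        simp [hhdef, hφzero y hy]
      exact hev.continuousAt
  -- a.e. differentiability of f on Ω₀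
  have hdiffae : ∀ᵐ x ∂(volume.restrict Ω₀), DifferentiableAt ℝ f x := by
    have hcover : Ω₀ = ⋃ (qr : ↥{qr : ℚ × ℚ | Set.Icc (qr.1:ℝ) (qr.2:ℝ) ⊆ Ω₀ ∧ (qr.1:ℝ) < (qr.2:ℝ)}),
        Set.Ioo (((qr:ℚ×ℚ).1:ℝ)) (((qr:ℚ×ℚ).2:ℝ)) := by
      apply Set.Subset.antisymm
      · intro x hx
        obtain ⟨ε, hεpos, hball⟩ := Metric.isOpen_iff.1 hΩ₀open x hx
        obtain ⟨q, hq1, hq2⟩ := exists_rat_btwn (show x - ε/2 < x by linarith)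
        obtain ⟨r, hr1, hr2⟩ := exists_rat_btwn (show x < x + ε/2 by linarith)
        have hsubIcc : Set.Icc (q:ℝ) (r:ℝ) ⊆ Ω₀ := by
          intro z hz
          apply hball
          rw [Metric.mem_ball, Real.dist_eq]
          have h1 := hz.1; have h2 := hz.2
          have habs : |z - x| ≤ ε/2 := abs_le.2 ⟨by linarith, by linarith⟩
          exact lt_of_le_of_lt habs (by linarith)
        exact Set.mem_iUnion.2 ⟨⟨(q,r), hsubIcc, lt_trans hq2 hr1⟩, hq2, hr1⟩
      · apply Set.iUnion_subset
        rintro ⟨⟨q,r⟩, hqr⟩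
        exact fun z hz => hqr.1 (Set.Ioo_subset_Icc_self hz)
    rw [hcover, ae_restrict_iUnion_iff]
    rintro ⟨⟨q, r⟩, hsubIcc, hqr⟩
    exact ac_ae_differentiableAt hqr.le (hAC q r hqr.le hsubIcc)
  -- integrability of the pieces on Ω₀
  have hfaem : AEStronglyMeasurable f (volume.restrict Ω₀) :=
    (hf.mono hΩ₀sub).aestronglyMeasurable hΩ₀meas
  have hfKbd : ∀ x ∈ tsupport φ, ‖f x‖ ≤ max MK 0 := fun x hx =>
    le_trans (hMK x hx) (le_max_left _ _)
  have hbd1 : ∀ x, ‖deriv φ x • f x‖ ≤ max M1 0 * max MK 0 := by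
    intro x
    by_cases hx : x ∈ tsupport φ
    · rw [norm_smul, Real.norm_eq_abs]
      exact mul_le_mul (hφ'bd x) (hfKbd x hx) (norm_nonneg _)
        (le_trans (abs_nonneg _) (hφ'bd x))
    · rw [hφ'zero x hx, zero_smul, norm_zero]
      exact mul_nonneg (le_max_right _ _) (le_max_right _ _)
  have hint1 : IntegrableOn (fun t => deriv φ t • f t) Ω₀ volume := by
    apply Integrable.mono' (integrable_const (max M1 0 * max MK 0))
      ((hφ'cont.aestronglyMeasurable.restrict).smul hfaem)
    exact ae_of_all _ hbd1
  have hderInt : IntegrableOn (deriv f) Ω₀ volume := hLp.integrable hp'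
  have hint2 : IntegrableOn (fun t => φ t • deriv f t) Ω₀ volume := by
    apply Integrable.mono' (hderInt.norm.const_mul (max M2 0))
      ((hφcont.aestronglyMeasurable.restrict).smul hLp.1)
    apply ae_of_all
    intro x
    rw [Pi.smul_apply', norm_smul, Real.norm_eq_abs]
    exact mul_le_mul_of_nonneg_right (hφbd x) (norm_nonneg _)
  have hintsum : IntegrableOn (fun t => deriv φ t • f t + φ t • deriv f t) Ω₀ volume :=
    hint1.add hint2
  -- the derivative of h a.e. on Ω₀
  have hhd : ∀ᵐ x ∂(volume.restrict Ω₀),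
      deriv h x = deriv φ x • f x + φ x • deriv f x := by
    filter_upwards [hdiffae] with x hx
    have h1 : HasDerivAt h (φ x • deriv f x + deriv φ x • f x) x :=
      (hφdiff x).smul hx.hasDerivAt
    rw [h1.deriv]
    exact add_comm _ _
  have hinth : IntegrableOn (deriv h) Ω₀ volume :=
    hintsum.congr (hhd.mono fun x hx => hx.symm)
  -- the integral of deriv h over Ω₀ vanishes (componentwise)
  have hzeroΩ₀ : ∫ t in Ω₀, deriv h t ∂volume = 0 := by
    apply setIntegral_open_eq_zero_of_components Ω₀ hΩ₀open hΩ₀bdd _ hinth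
    intro a b hab hIooSub haΩ₀ hbΩ₀
    have hval : ∀ e : ℝ, e ∉ Ω₀ → h e = 0 := by
      intro e he
      by_cases heΩ : e ∈ Ω
      · have hfe : f e = 0 := by
          by_contra hfe
          exact he (by rw [hΩ₀]; exact ⟨heΩ, hfe⟩)
        simp [hhdef, hfe]
      · have hφe : φ e = 0 := hφzero e (fun hK' => heΩ (hKΩ hK'))
        simp [hhdef, hφe]
    apply integral_Ioo_deriv_eq_zero h hab hhcont (hval a haΩ₀) (hval b hbΩ₀) ?_
      (hinth.mono_set hIooSub)
    intro c d hac hcd hdb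
    have hIcc : Set.Icc c d ⊆ Ω₀ := fun z hz =>
      hIooSub ⟨lt_of_lt_of_le hac hz.1, lt_of_le_of_lt hz.2 hdb⟩
    obtain ⟨Mf, hMf⟩ := isCompact_Icc.exists_bound_of_continuousOn
      (hf.mono (hIcc.trans hΩ₀sub))
    exact (hAC c d hcd hIcc).smul_left (le_max_right M2 0) (le_max_right M1 0)
      (le_max_right Mf 0) (fun x _ => hφbd x) (fun x _ y _ => hφlip x y)
      (fun x hx => le_trans (hMf x hx) (le_max_left _ _))
  -- split the vanishing integral
  have hsplit : ∫ t in Ω₀, deriv h t ∂volume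
      = (∫ t in Ω₀, deriv φ t • f t ∂volume) + ∫ t in Ω₀, φ t • deriv f t ∂volume := by
    rw [integral_congr_ae hhd]
    exact integral_add hint1 hint2
  have hkey : (∫ t in Ω₀, deriv φ t • f t ∂volume)
      = - ∫ t in Ω₀, φ t • deriv f t ∂volume := by
    apply eq_neg_of_add_eq_zero_left
    rw [← hsplit]
    exact hzeroΩ₀
  -- reduce the Ω-integrals to Ω₀
  have hLHS : ∫ t in Ω, deriv φ t • f t ∂volume = ∫ t in Ω₀, deriv φ t • f t ∂volume := by
    have hunion : Ω = Ω₀ ∪ (Ω \ Ω₀) := (Set.union_diff_cancel hΩ₀sub).symm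
    have hzero2 : ∀ t ∈ Ω \ Ω₀, deriv φ t • f t = 0 := by
      intro t ht
      have hft : f t = 0 := by
        by_contra hft
        exact ht.2 (by rw [hΩ₀]; exact ⟨ht.1, hft⟩)
      simp [hft]
    have hint2' : IntegrableOn (fun t => deriv φ t • f t) (Ω \ Ω₀) volume := by
      apply Integrable.congr (integrable_zero _ _ _)
      refine (ae_restrict_iff' (hΩmeas.diff hΩ₀meas)).2 (ae_of_all _ ?_)
      intro t ht
      exact (hzero2 t ht).symm
    rw [hunion, setIntegral_union disjoint_sdiff_right (hΩmeas.diff hΩ₀meas) hint1 hint2',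
      setIntegral_eq_zero_of_forall_eq_zero hzero2, add_zero]
  have hRHS : ∫ t in Ω, φ t • g t ∂volume = ∫ t in Ω₀, φ t • deriv f t ∂volume := by
    have heq : ∀ t, φ t • g t = Ω₀.indicator (fun s => φ s • deriv f s) t := by
      intro t
      by_cases ht : t ∈ Ω₀
      · rw [hgdef, Set.indicator_of_mem ht, Set.indicator_of_mem ht]
      · rw [hgdef, Set.indicator_of_notMem ht, Set.indicator_of_notMem ht, smul_zero]
    calc ∫ t in Ω, φ t • g t ∂volume
        = ∫ t in Ω, Ω₀.indicator (fun s => φ s • deriv f s) t ∂volume := by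
          exact integral_congr_ae (ae_of_all _ (fun t => heq t))
      _ = ∫ t in Ω ∩ Ω₀, φ t • deriv f t ∂volume := setIntegral_indicator hΩ₀meas
      _ = ∫ t in Ω₀, φ t • deriv f t ∂volume := by
          rw [Set.inter_eq_self_of_subset_right hΩ₀sub]
  rw [hLHS, hkey, hRHS]
end
end

section
/- Let d ≥ 1 be an integer and I ⊆ ℝ a bounded open interval. Let f, g : I → ℂ be continuous functions with f^d = g^d. If f is absolutely continuous on I with f′ ∈ L^1(I), then g is absolutely continuous on I and ‖f′‖_{L^1(I)} = ‖g′‖_{L^1(I)}. (In particular, the L^1-norm of the derivative of a continuous selection of the multi-valued d-th root of a given continuous function is independent of the selection.) -/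
open MeasureTheory Set
open scoped ENNReal NNReal

noncomputable section

open Filter Topology

namespace RootSelAux

lemma roots_finite {d : ℕ} (hd : 1 ≤ d) : ({z : ℂ | z ^ d = 1} : Set ℂ).Finite := by
  have hsub : {z : ℂ | z ^ d = 1} ⊆
      {z : ℂ | (Polynomial.X ^ d - Polynomial.C 1 : Polynomial ℂ).IsRoot z} := by
    intro z hz
    simp only [Set.mem_setOf_eq, Polynomial.IsRoot.def, Polynomial.eval_sub, Polynomial.eval_pow,
      Polynomial.eval_X, Polynomial.eval_C] at *
    rw [hz]; ring
  exact (Polynomial.finite_setOf_isRoot (Polynomial.X_pow_sub_C_ne_zero hd 1)).subset hsub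

variable {d : ℕ} {α β : ℝ} {f g : ℝ → ℂ}

lemma norm_eq (hd : 1 ≤ d) (hfg : ∀ t ∈ Set.Ioo α β, f t ^ d = g t ^ d)
    {t : ℝ} (ht : t ∈ Set.Ioo α β) : ‖g t‖ = ‖f t‖ := by
  have h : ‖f t‖ ^ d = ‖g t‖ ^ d := by rw [← norm_pow, ← norm_pow, hfg t ht]
  exact ((pow_left_inj₀ (norm_nonneg _) (norm_nonneg _) (by omega)).mp h).symm

lemma g_eq_zero (hd : 1 ≤ d) (hfg : ∀ t ∈ Set.Ioo α β, f t ^ d = g t ^ d)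
    {t : ℝ} (ht : t ∈ Set.Ioo α β) (h0 : f t = 0) : g t = 0 := by
  have h : g t ^ d = 0 := by rw [← hfg t ht, h0, zero_pow (by omega)]
  exact (pow_eq_zero_iff (by omega)).mp h

lemma ratio_const (hd : 1 ≤ d) (hf : ContinuousOn f (Set.Ioo α β))
    (hg : ContinuousOn g (Set.Ioo α β)) (hfg : ∀ t ∈ Set.Ioo α β, f t ^ d = g t ^ d)
    {s : Set ℝ} (hs : IsPreconnected s) (hsub : s ⊆ Set.Ioo α β)
    (hne : ∀ t ∈ s, f t ≠ 0) {x y : ℝ} (hx : x ∈ s) (hy : y ∈ s) :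
    g x / f x = g y / f y := by
  haveI : Finite ↥({z : ℂ | z ^ d = 1}) := (roots_finite hd).to_subtype
  refine hs.constant_of_mapsTo (T := {z : ℂ | z ^ d = 1}) (f := fun t => g t / f t)
    (roots_finite hd).isDiscrete ((hg.mono hsub).div (hf.mono hsub) hne) ?_ hx hy
  intro t ht
  have hft := hne t ht
  simp only [Set.mem_setOf_eq, div_pow]
  rw [← hfg t (hsub ht), div_self (pow_ne_zero _ hft)]

lemma norm_sub_eq (hd : 1 ≤ d) (hf : ContinuousOn f (Set.Ioo α β))
    (hg : ContinuousOn g (Set.Ioo α β)) (hfg : ∀ t ∈ Set.Ioo α β, f t ^ d = g t ^ d)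
    {s : Set ℝ} (hs : IsPreconnected s) (hsub : s ⊆ Set.Ioo α β)
    (hne : ∀ t ∈ s, f t ≠ 0) {x y : ℝ} (hx : x ∈ s) (hy : y ∈ s) :
    ‖g x - g y‖ = ‖f x - f y‖ := by
  have hgx : g x = (g x / f x) * f x := (div_mul_cancel₀ _ (hne x hx)).symm
  have hgy : g y = (g x / f x) * f y := by
    rw [ratio_const hd hf hg hfg hs hsub hne hx hy]
    exact (div_mul_cancel₀ _ (hne y hy)).symm
  have hζ1 : ‖g x / f x‖ = 1 := by
    rw [norm_div, norm_eq hd hfg (hsub hx), div_self (norm_ne_zero_iff.mpr (hne x hx))]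
  rw [hgx, hgy, ← mul_sub, norm_mul, hζ1, one_mul]

lemma key (hd : 1 ≤ d) (hf : ContinuousOn f (Set.Ioo α β))
    (hg : ContinuousOn g (Set.Ioo α β)) (hfg : ∀ t ∈ Set.Ioo α β, f t ^ d = g t ^ d)
    {a b : ℝ} (hab : a ≤ b) (hsub : Set.Icc a b ⊆ Set.Ioo α β) :
    ∃ a' b' : ℝ, a ≤ a' ∧ a' ≤ b' ∧ b' ≤ b ∧
      ‖g b - g a‖ ≤ ‖f a' - f a‖ + ‖f b - f b'‖ := by
  have ha : a ∈ Set.Icc a b := ⟨le_refl a, hab⟩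
  have hb : b ∈ Set.Icc a b := ⟨hab, le_refl b⟩
  set S : Set ℝ := Set.Icc a b ∩ f ⁻¹' {0} with hS
  by_cases hSne : S.Nonempty
  · have hclosed : IsClosed S :=
      (hf.mono hsub).preimage_isClosed_of_isClosed isClosed_Icc isClosed_singleton
    have hcomp : IsCompact S := isCompact_Icc.of_isClosed_subset hclosed Set.inter_subset_left
    have hInf := hcomp.sInf_mem hSne
    have hSup := hcomp.sSup_mem hSne
    refine ⟨sInf S, sSup S, hInf.1.1, csInf_le_csSup hSne hcomp.bddBelow hcomp.bddAbove,
      hSup.1.2, ?_⟩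
    have h1 : f (sInf S) = 0 := hInf.2
    have h2 : f (sSup S) = 0 := hSup.2
    have e1 : ‖f (sInf S) - f a‖ = ‖g a‖ := by
      rw [h1, zero_sub, norm_neg, norm_eq hd hfg (hsub ha)]
    have e2 : ‖f b - f (sSup S)‖ = ‖g b‖ := by
      rw [h2, sub_zero, norm_eq hd hfg (hsub hb)]
    rw [e1, e2]
    exact (norm_sub_le _ _).trans (le_of_eq (add_comm _ _))
  · refine ⟨b, b, hab, le_refl b, le_refl b, ?_⟩
    have hne : ∀ t ∈ Set.Icc a b, f t ≠ 0 := by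
      intro t ht h0
      exact hSne ⟨t, ht, h0⟩
    have heq := norm_sub_eq hd hf hg hfg isPreconnected_Icc hsub hne hb ha
    rw [sub_self, norm_zero, add_zero]
    exact le_of_eq heq

lemma g_AC (hd : 1 ≤ d) (hf : ContinuousOn f (Set.Ioo α β))
    (hg : ContinuousOn g (Set.Ioo α β)) (hfg : ∀ t ∈ Set.Ioo α β, f t ^ d = g t ^ d)
    (hfAC : AbsolutelyContinuousOn f (Set.Ioo α β)) :
    AbsolutelyContinuousOn g (Set.Ioo α β) := by
  intro ε hε
  obtain ⟨δ, hδ, H⟩ := hfAC ε hε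
  refine ⟨δ, hδ, ?_⟩
  intro m a b hab hIcc hdisj hsum
  choose a' b' ha' hab' hb' hkey using fun i => key hd hf hg hfg (hab i) (hIcc i)
  set A : Fin (m + m) → ℝ := Fin.append a b' with hA
  set B : Fin (m + m) → ℝ := Fin.append a' b with hB
  have hcases : ∀ i : Fin (m + m), (∃ j, i = Fin.castAdd m j) ∨ (∃ j, i = Fin.natAdd m j) := by
    intro i
    induction i using Fin.addCases with
    | left j => exact Or.inl ⟨j, rfl⟩
    | right j => exact Or.inr ⟨j, rfl⟩
  have hAB : ∀ i, A i ≤ B i := by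
    intro i
    rcases hcases i with ⟨j, rfl⟩ | ⟨j, rfl⟩
    · simp only [hA, hB, Fin.append_left]; exact ha' j
    · simp only [hA, hB, Fin.append_right]; exact hb' j
  have hIccsub : ∀ i, Set.Icc (A i) (B i) ⊆ Set.Ioo α β := by
    intro i
    rcases hcases i with ⟨j, rfl⟩ | ⟨j, rfl⟩
    · simp only [hA, hB, Fin.append_left]
      exact (Set.Icc_subset_Icc le_rfl ((hab' j).trans (hb' j))).trans (hIcc j)
    · simp only [hA, hB, Fin.append_right]
      exact (Set.Icc_subset_Icc ((ha' j).trans (hab' j)) le_rfl).trans (hIcc j)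
  have sub1 : ∀ j : Fin m,
      Set.Ioo (A (Fin.castAdd m j)) (B (Fin.castAdd m j)) ⊆ Set.Ioo (a j) (b j) := by
    intro j
    simp only [hA, hB, Fin.append_left]
    exact Set.Ioo_subset_Ioo le_rfl ((hab' j).trans (hb' j))
  have sub2 : ∀ j : Fin m,
      Set.Ioo (A (Fin.natAdd m j)) (B (Fin.natAdd m j)) ⊆ Set.Ioo (a j) (b j) := by
    intro j
    simp only [hA, hB, Fin.append_right]
    exact Set.Ioo_subset_Ioo ((ha' j).trans (hab' j)) le_rfl
  have hdisj2 : Pairwise fun i j : Fin (m + m) =>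
      Set.Ioo (A i) (B i) ∩ Set.Ioo (A j) (B j) = ∅ := by
    intro i j hij
    rw [Set.eq_empty_iff_forall_notMem]
    rintro x ⟨hxi, hxj⟩
    rcases hcases i with ⟨i', rfl⟩ | ⟨i', rfl⟩ <;> rcases hcases j with ⟨j', rfl⟩ | ⟨j', rfl⟩
    · have hne : i' ≠ j' := fun h => hij (by rw [h])
      have := hdisj hne
      have hx : x ∈ Set.Ioo (a i') (b i') ∩ Set.Ioo (a j') (b j') := ⟨sub1 i' hxi, sub1 j' hxj⟩
      rw [this] at hx
      exact hx
    · by_cases h : i' = j'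
      · subst h
        have h1 : x < a' i' := by
          have := hxi
          simp only [hA, hB, Fin.append_left] at this
          exact this.2
        have h2 : b' i' < x := by
          have := hxj
          simp only [hA, hB, Fin.append_right] at this
          exact this.1
        linarith [hab' i']
      · have := hdisj h
        have hx : x ∈ Set.Ioo (a i') (b i') ∩ Set.Ioo (a j') (b j') := ⟨sub1 i' hxi, sub2 j' hxj⟩
        rw [this] at hx
        exact hx
    · by_cases h : i' = j'
      · subst h
        have h1 : x < a' i' := by
          have := hxj
          simp only [hA, hB, Fin.append_left] at this
          exact this.2
        have h2 : b' i' < x := by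
          have := hxi
          simp only [hA, hB, Fin.append_right] at this
          exact this.1
        linarith [hab' i']
      · have := hdisj h
        have hx : x ∈ Set.Ioo (a i') (b i') ∩ Set.Ioo (a j') (b j') := ⟨sub2 i' hxi, sub1 j' hxj⟩
        rw [this] at hx
        exact hx
    · have hne : i' ≠ j' := fun h => hij (by rw [h])
      have := hdisj hne
      have hx : x ∈ Set.Ioo (a i') (b i') ∩ Set.Ioo (a j') (b j') := ⟨sub2 i' hxi, sub2 j' hxj⟩
      rw [this] at hx
      exact hx
  have hsum2 : (∑ i, (B i - A i)) < δ := by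
    have : (∑ i, (B i - A i)) = ∑ j, (a' j - a j) + ∑ j, (b j - b' j) := by
      rw [Fin.sum_univ_add (f := fun i => B i - A i)]
      simp only [hA, hB, Fin.append_left, Fin.append_right]
    rw [this, ← Finset.sum_add_distrib]
    calc ∑ j, (a' j - a j + (b j - b' j)) ≤ ∑ j, (b j - a j) :=
          Finset.sum_le_sum fun j _ => by linarith [hab' j]
      _ < δ := hsum
  have hfin := H (m + m) A B hAB hIccsub hdisj2 hsum2
  calc ∑ i, ‖g (b i) - g (a i)‖
      ≤ ∑ i, (‖f (a' i) - f (a i)‖ + ‖f (b i) - f (b' i)‖) :=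
        Finset.sum_le_sum fun i _ => hkey i
    _ = ∑ j, ‖f (a' j) - f (a j)‖ + ∑ j, ‖f (b j) - f (b' j)‖ := Finset.sum_add_distrib
    _ = ∑ i, ‖f (B i) - f (A i)‖ := by
        rw [Fin.sum_univ_add (f := fun i => ‖f (B i) - f (A i)‖)]
        simp only [hA, hB, Fin.append_left, Fin.append_right]
    _ < ε := hfin

lemma slope_deriv_zero {F : ℝ → ℂ} {Z : Set ℝ} (hF : ∀ s ∈ Z, F s = 0) {t : ℝ} (htZ : t ∈ Z)
    (hacc : (𝓝[Z \ {t}] t).NeBot) : deriv F t = 0 := by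
  by_cases hdiff : DifferentiableAt ℝ F t
  · have h := hdiff.hasDerivAt
    rw [hasDerivAt_iff_tendsto_slope] at h
    have h2 : Tendsto (slope F t) (𝓝[Z \ {t}] t) (𝓝 (deriv F t)) :=
      h.mono_left (nhdsWithin_mono t fun s hs => hs.2)
    have h3 : Tendsto (slope F t) (𝓝[Z \ {t}] t) (𝓝 0) := by
      refine tendsto_const_nhds.congr' ?_
      filter_upwards [eventually_mem_nhdsWithin] with s hs
      simp [slope, hF s hs.1, hF t htZ]
    exact (tendsto_nhds_unique h2 h3)
  · exact deriv_zero_of_not_differentiableAt hdiff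

lemma norm_deriv_eq_of_ne (hd : 1 ≤ d) (hf : ContinuousOn f (Set.Ioo α β))
    (hg : ContinuousOn g (Set.Ioo α β)) (hfg : ∀ t ∈ Set.Ioo α β, f t ^ d = g t ^ d)
    {t : ℝ} (ht : t ∈ Set.Ioo α β) (h0 : f t ≠ 0) :
    ‖deriv g t‖ = ‖deriv f t‖ := by
  have hc : ContinuousAt f t := hf.continuousAt (Ioo_mem_nhds ht.1 ht.2)
  have hne : ∀ᶠ s in 𝓝 t, f s ≠ 0 := hc.eventually_ne h0
  have hmem : Set.Ioo α β ∩ {s | f s ≠ 0} ∈ 𝓝 t :=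
    Filter.inter_mem (Ioo_mem_nhds ht.1 ht.2) hne
  obtain ⟨ε, hε, hball⟩ := Metric.mem_nhds_iff.mp hmem
  rw [Real.ball_eq_Ioo] at hball
  have hts : t ∈ Set.Ioo (t - ε) (t + ε) := by constructor <;> linarith
  have hssub : Set.Ioo (t - ε) (t + ε) ⊆ Set.Ioo α β := fun x hx => (hball hx).1
  have hsne : ∀ x ∈ Set.Ioo (t - ε) (t + ε), f x ≠ 0 := fun x hx => (hball hx).2
  have hζ1 : ‖g t / f t‖ = 1 := by
    rw [norm_div, norm_eq hd hfg ht, div_self (norm_ne_zero_iff.mpr h0)]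
  have heq : ∀ x ∈ Set.Ioo (t - ε) (t + ε), g x = (g t / f t) * f x := by
    intro x hx
    rw [← ratio_const hd hf hg hfg isPreconnected_Ioo hssub hsne hx hts]
    exact (div_mul_cancel₀ _ (hsne x hx)).symm
  have hev : g =ᶠ[𝓝 t] fun x => (g t / f t) * f x := by
    filter_upwards [Ioo_mem_nhds hts.1 hts.2] with x hx using heq x hx
  rw [hev.deriv_eq, deriv_const_mul_field, norm_mul, hζ1, one_mul]

lemma isolated_countable (Z : Set ℝ) : {t : ℝ | t ∈ Z ∧ ¬(𝓝[Z \ {t}] t).NeBot}.Countable := by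
  set W := {t : ℝ | t ∈ Z ∧ ¬(𝓝[Z \ {t}] t).NeBot} with hW
  have hex : ∀ t : W, ∃ p : ℚ × ℚ, (p.1 : ℝ) < t ∧ (t : ℝ) < p.2 ∧
      ∀ s ∈ Z, s ∈ Set.Ioo (p.1 : ℝ) (p.2 : ℝ) → s = t := by
    rintro ⟨t, htZ, hiso⟩
    have hncl : t ∉ closure (Z \ {t}) := by
      rw [mem_closure_iff_nhdsWithin_neBot]; exact hiso
    obtain ⟨ε, hε, hball⟩ := Metric.isOpen_iff.mp isClosed_closure.isOpen_compl t hncl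
    rw [Real.ball_eq_Ioo] at hball
    obtain ⟨q, hq1, hq2⟩ := exists_rat_btwn (show t - ε < t by linarith)
    obtain ⟨r, hr1, hr2⟩ := exists_rat_btwn (show t < t + ε by linarith)
    refine ⟨(q, r), hq2, hr1, ?_⟩
    intro s hsZ hsI
    by_contra hne
    have hmem : s ∈ (closure (Z \ {t}))ᶜ :=
      hball ⟨by linarith [hsI.1], by linarith [hsI.2]⟩
    exact hmem (subset_closure ⟨hsZ, hne⟩)
  choose p hp1 hp2 hp3 using hex
  have hinj : Function.Injective p := by
    intro t t' h
    by_contra hne'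
    have h1 : (t' : ℝ) ∈ Set.Ioo ((p t).1 : ℝ) ((p t).2 : ℝ) := by
      rw [h]; exact ⟨hp1 t', hp2 t'⟩
    have h2 : (t' : ℝ) = (t : ℝ) := hp3 t t'.1 t'.2.1 h1
    exact hne' (Subtype.ext h2).symm
  have : Countable ↥W := hinj.countable
  exact Set.countable_coe_iff.mp this

end RootSelAux


/-- **Independence of the root selection.**
Let `d ≥ 1`, `I = (α,β)` a bounded open interval, and `f, g : I → ℂ` continuous with
`f^d = g^d` on `I`.  If `f` is absolutely continuous on `I` with `f′ ∈ L^1(I)`, then `g`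
is absolutely continuous on `I` and `‖f′‖_{L^1(I)} = ‖g′‖_{L^1(I)}`. -/
theorem root_selection_independence
    (d : ℕ) (hd : 1 ≤ d) (α β : ℝ) (hαβ : α < β)
    (f g : ℝ → ℂ)
    (hf : ContinuousOn f (Set.Ioo α β)) (hg : ContinuousOn g (Set.Ioo α β))
    (hfg : ∀ t ∈ Set.Ioo α β, f t ^ d = g t ^ d)
    (hfAC : AbsolutelyContinuousOn f (Set.Ioo α β))
    (hfL1 : IntegrableOn (deriv f) (Set.Ioo α β)) :
    AbsolutelyContinuousOn g (Set.Ioo α β) ∧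
    IntegrableOn (deriv g) (Set.Ioo α β) ∧
    ∫ t in Set.Ioo α β, ‖deriv f t‖ = ∫ t in Set.Ioo α β, ‖deriv g t‖ := by
  classical
  have hZW := RootSelAux.isolated_countable {s : ℝ | s ∈ Set.Ioo α β ∧ f s = 0}
  set Z : Set ℝ := {s : ℝ | s ∈ Set.Ioo α β ∧ f s = 0} with hZdef
  have hae : ∀ᵐ t ∂(volume.restrict (Set.Ioo α β)), ‖deriv g t‖ = ‖deriv f t‖ := by
    rw [MeasureTheory.ae_restrict_iff' measurableSet_Ioo]
    have hW0 : ∀ᵐ t ∂(volume : Measure ℝ),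
        t ∉ {t : ℝ | t ∈ Z ∧ ¬(nhdsWithin t (Z \ {t})).NeBot} :=
      measure_eq_zero_iff_ae_notMem.mp (hZW.measure_zero volume)
    filter_upwards [hW0] with t htW htI
    by_cases h0 : f t = 0
    · have htZ : t ∈ Z := ⟨htI, h0⟩
      have hacc : (nhdsWithin t (Z \ {t})).NeBot := by
        by_contra hc
        exact htW ⟨htZ, hc⟩
      have hZf : ∀ s ∈ Z, f s = 0 := fun s hs => hs.2
      have hZg : ∀ s ∈ Z, g s = 0 := fun s hs => RootSelAux.g_eq_zero hd hfg hs.1 hs.2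
      rw [RootSelAux.slope_deriv_zero hZf htZ hacc,
        RootSelAux.slope_deriv_zero hZg htZ hacc]
    · exact RootSelAux.norm_deriv_eq_of_ne hd hf hg hfg htI h0
  refine ⟨RootSelAux.g_AC hd hf hg hfg hfAC, ?_, ?_⟩
  · exact MeasureTheory.Integrable.mono hfL1 (measurable_deriv g).aestronglyMeasurable
      (hae.mono fun t h => le_of_eq h)
  · exact MeasureTheory.integral_congr_ae (hae.mono fun t h => h.symm)
end
end

section
/- Let I ⊆ ℝ be a bounded open interval, m ∈ ℕ with m ≥ 1, and α ∈ (0,1]. There is a constant C depending only on m and α such that: if f ∈ C^{m,α}(Ī) (complex valued), then for all t ∈ I and all s = 1,…,m, |f^{(s)}(t)| ≤ C |I|^{−s} ( V_I(f) + V_I(f)^{(m+α−s)/(m+α)} · (Höld_{α,I}(f^{(m)}))^{s/(m+α)} · |I|^s ), where V_I(f) := sup_{t,s ∈ I} |f(t) − f(s)| is the diameter of f(I) and Höld_{α,I}(h) := sup_{x≠y ∈ I} |h(x)−h(y)|/|x−y|^α. -/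
open MeasureTheory Set
open scoped ENNReal NNReal

noncomputable section

/-- The Hölder seminorm (best Hölder constant of exponent `a`) of `f` on `s`. -/
def holderConstOn {E : Type*} [NormedAddCommGroup E] (a : ℝ) (f : ℝ → E) (s : Set ℝ) : ℝ :=
  sInf {C : ℝ | 0 ≤ C ∧ ∀ x ∈ s, ∀ y ∈ s, ‖f x - f y‖ ≤ C * |x - y| ^ a}


section AuxInterp
open scoped Nat

lemma coeffBound (m : ℕ) : ∃ C : ℝ, 1 ≤ C ∧ ∀ (b : Fin (m+1) → ℂ) (M : ℝ),
    (∀ u : ℝ, u ∈ Set.Icc (0:ℝ) 1 → ‖∑ k : Fin (m+1), (u:ℂ)^(k:ℕ) * b k‖ ≤ M) →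
    ∀ k, ‖b k‖ ≤ C * M := by
  set v : Fin (m+1) → ℂ := fun j => (j : ℂ) / (m+1) with hv
  have hm1 : ((m:ℂ) + 1) ≠ 0 := by
    have : ((m+1:ℕ):ℂ) ≠ 0 := Nat.cast_ne_zero.mpr (Nat.succ_ne_zero m)
    push_cast at this; exact this
  have hvinj : Function.Injective v := by
    intro i j hij
    have h2 : ((i:ℕ):ℂ) = ((j:ℕ):ℂ) := by
      rw [hv] at hij
      simp only [div_left_inj' hm1] at hij
      exact_mod_cast hij
    have : (i:ℕ) = (j:ℕ) := by exact_mod_cast h2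
    exact Fin.ext this
  set W := Matrix.vandermonde v with hW
  have hdet : W.det ≠ 0 := Matrix.det_vandermonde_ne_zero_iff.mpr hvinj
  have hUnit : IsUnit W.det := isUnit_iff_ne_zero.mpr hdet
  refine ⟨1 + ∑ k : Fin (m+1), ∑ i : Fin (m+1), ‖W⁻¹ k i‖, ?_, ?_⟩
  · have : (0:ℝ) ≤ ∑ k : Fin (m+1), ∑ i : Fin (m+1), ‖W⁻¹ k i‖ :=
      Finset.sum_nonneg fun k _ => Finset.sum_nonneg fun i _ => norm_nonneg _
    linarith
  intro b M hb k
  have hM0 : 0 ≤ M := le_trans (norm_nonneg _) (hb 0 ⟨le_refl _, zero_le_one⟩)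
  set vals := W.mulVec b with hvals
  have hvb : ∀ i, ‖vals i‖ ≤ M := by
    intro i
    have hmem : (i:ℝ)/(m+1) ∈ Set.Icc (0:ℝ) 1 := by
      constructor
      · positivity
      · rw [div_le_one (by positivity)]
        have : (i:ℕ) ≤ m + 1 := le_of_lt i.isLt
        exact_mod_cast this
    have := hb ((i:ℝ)/(m+1)) hmem
    convert this using 2
    simp only [hvals, Matrix.mulVec, dotProduct, hW, Matrix.vandermonde]
    apply Finset.sum_congr rfl
    intro j _
    congr 1
    push_cast
    rfl
  have hbv : b = W⁻¹.mulVec vals := by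
    rw [hvals, Matrix.mulVec_mulVec, Matrix.nonsing_inv_mul W hUnit, Matrix.one_mulVec]
  calc ‖b k‖ = ‖∑ i, W⁻¹ k i * vals i‖ := by
        rw [hbv]; rfl
    _ ≤ ∑ i, ‖W⁻¹ k i * vals i‖ := norm_sum_le _ _
    _ ≤ ∑ i, ‖W⁻¹ k i‖ * M := by
        apply Finset.sum_le_sum
        intro i _
        rw [norm_mul]
        exact mul_le_mul_of_nonneg_left (hvb i) (norm_nonneg _)
    _ = (∑ i, ‖W⁻¹ k i‖) * M := by rw [Finset.sum_mul]
    _ ≤ (1 + ∑ k : Fin (m+1), ∑ i : Fin (m+1), ‖W⁻¹ k i‖) * M := by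
        apply mul_le_mul_of_nonneg_right _ hM0
        have h1 : (∑ i, ‖W⁻¹ k i‖) ≤ ∑ k : Fin (m+1), ∑ i : Fin (m+1), ‖W⁻¹ k i‖ :=
          Finset.single_le_sum (f := fun k => ∑ i, ‖W⁻¹ k i‖)
            (fun k _ => Finset.sum_nonneg fun i _ => norm_nonneg _) (Finset.mem_univ k)
        linarith

lemma taylor_holder {k : ℕ} {a : ℝ} (ha : 0 < a) {c d : ℝ} (hcd : c < d) {f : ℝ → ℂ}
    (hf : ContDiffOn ℝ (k+1) f (Set.Icc c d)) {H : ℝ} (hH : 0 ≤ H)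
    (hHold : ∀ x ∈ Set.Icc c d, ∀ y ∈ Set.Icc c d,
      ‖iteratedDerivWithin (k+1) f (Set.Icc c d) x -
        iteratedDerivWithin (k+1) f (Set.Icc c d) y‖ ≤ H * |x - y| ^ a)
    {t x : ℝ} (ht : t ∈ Set.Icc c d) (hx : x ∈ Set.Icc c d) :
    ‖f x - taylorWithinEval f (k+1) (Set.Icc c d) t x‖ ≤ H * (d - c) ^ ((k:ℝ) + 1 + a) := by
  have hpos : (0:ℝ) < d - c := by linarith [hcd]
  set s : Set ℝ := Set.Icc c d with hs
  set g : ℂ := iteratedDerivWithin (k+1) f s t with hg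
  set F : ℝ → ℂ := fun u =>
    taylorWithinEval f k s u x + ((((k:ℝ)+1) * (k ! : ℝ))⁻¹ * (x - u)^(k+1)) • g with hF
  set F' : ℝ → ℂ := fun u =>
    (((k ! : ℝ))⁻¹ * (x - u)^k) • (iteratedDerivWithin (k+1) f s u - g) with hF'
  have hkfac : ((k ! : ℝ)) ≠ 0 := by exact_mod_cast k.factorial_ne_zero
  have hk1 : ((k:ℝ) + 1) ≠ 0 := by positivity
  have hdiff : DifferentiableOn ℝ (iteratedDerivWithin k f s) s :=
    hf.differentiableOn_iteratedDerivWithin (by exact_mod_cast Nat.lt_succ_self k)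
      (uniqueDiffOn_Icc hcd)
  have hder : ∀ u ∈ s, HasDerivWithinAt F (F' u) s u := by
    intro u hu
    have part1 := hasDerivWithinAt_taylorWithinEval_at_Icc x hcd hu hf.of_succ hdiff
    have part2 : HasDerivAt (fun u => ((((k:ℝ)+1) * (k ! : ℝ))⁻¹ * (x - u)^(k+1)) • g)
        (((((k:ℝ)+1) * (k ! : ℝ))⁻¹ * (-((k:ℝ)+1) * (x - u)^k)) • g) u :=
      ((monomial_has_deriv_aux u x k).const_mul _).smul_const g
    have := part1.add (part2.hasDerivWithinAt)
    convert this using 1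
    · rfl
    · rfl
    have hco : ((((k:ℝ)+1) * (k ! : ℝ))⁻¹ * (-((k:ℝ)+1) * (x - u)^k)) = -((k ! :ℝ)⁻¹ * (x - u)^k) := by
      field_simp
    simp only [hF', smul_sub, hco, neg_smul]
    abel
  have hbound : ∀ u ∈ s, ‖F' u‖ ≤ (d-c)^k * (H * (d-c) ^ a) := by
    intro u hu
    have habs : |x - u| ≤ d - c := by
      rw [abs_le]
      simp only [hs, Set.mem_Icc] at hx hu
      constructor <;> linarith
    have hH1 : ‖iteratedDerivWithin (k+1) f s u - g‖ ≤ H * (d-c) ^ a := by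
      have h1 := hHold u hu t ht
      have h2 : |u - t| ^ a ≤ (d - c) ^ a := by
        apply Real.rpow_le_rpow (abs_nonneg _) _ ha.le
        rw [abs_le]
        simp only [hs, Set.mem_Icc] at ht hu
        constructor <;> linarith [ht.1, ht.2, hu.1, hu.2]
      exact le_trans h1 (mul_le_mul_of_nonneg_left h2 hH)
    calc ‖F' u‖ = |((k ! : ℝ))⁻¹ * (x-u)^k| * ‖iteratedDerivWithin (k+1) f s u - g‖ := by
          simp only [hF']
          rw [norm_smul, Real.norm_eq_abs]
      _ ≤ (1 * (d-c)^k) * (H * (d-c)^a) := by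
          apply mul_le_mul _ hH1 (norm_nonneg _) (by positivity)
          rw [abs_mul, abs_pow]
          apply mul_le_mul _ (pow_le_pow_left₀ (abs_nonneg _) habs k) (by positivity) zero_le_one
          rw [abs_of_nonneg (by positivity)]
          apply inv_le_one_of_one_le₀
          exact_mod_cast Nat.one_le_iff_ne_zero.mpr k.factorial_ne_zero
      _ = (d-c)^k * (H * (d-c)^a) := by ring
  have key := Convex.norm_image_sub_le_of_norm_hasDerivWithin_le hder hbound (convex_Icc c d) ht hx
  have hFx : F x = f x := by
    simp only [hF]
    rw [taylorWithinEval_self]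
    simp
  have hFt : F t = taylorWithinEval f (k+1) s t x := by
    rw [taylorWithinEval_succ]
  rw [hFx, hFt] at key
  have habs2 : ‖x - t‖ ≤ d - c := by
    rw [Real.norm_eq_abs, abs_le]
    simp only [hs, Set.mem_Icc] at ht hx
    constructor <;> linarith [ht.1, ht.2, hx.1, hx.2]
  calc ‖f x - taylorWithinEval f (k+1) s t x‖ ≤ ((d-c)^k * (H * (d-c)^a)) * ‖x - t‖ := key
    _ ≤ (d-c)^k * (H * (d-c)^a) * (d-c) := by
        apply mul_le_mul_of_nonneg_left habs2 (by positivity)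
    _ = H * ((d-c)^k * (d-c)^a * (d-c)) := by ring
    _ = H * (d-c)^((k:ℝ)+1+a) := by
        congr 1
        rw [show ((k:ℝ)+1+a) = (k:ℝ) + a + 1 by ring, Real.rpow_add hpos, Real.rpow_add hpos,
          Real.rpow_natCast, Real.rpow_one]

lemma iterDeriv_subset {f : ℝ → ℂ} {α β c d : ℝ} (hαβ : α < β) (hcd : c < d)
    (hsub : Set.Icc c d ⊆ Set.Icc α β) {m k : ℕ} (hk : k ≤ m)
    (hf : ContDiffOn ℝ m f (Set.Icc α β)) {x : ℝ} (hx : x ∈ Set.Icc c d) :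
    iteratedDerivWithin k f (Set.Icc c d) x = iteratedDerivWithin k f (Set.Icc α β) x := by
  have h1 := (hf.ftaylorSeriesWithin (uniqueDiffOn_Icc hαβ)).mono hsub
  have h2 := h1.eq_iteratedFDerivWithin_of_uniqueDiffOn (m := k) (by exact_mod_cast hk)
    (uniqueDiffOn_Icc hcd) hx
  simp only [iteratedDerivWithin_eq_iteratedFDerivWithin]
  rw [← h2]
  rfl
lemma base_est (m : ℕ) (hm : 1 ≤ m) (a : ℝ) (ha : 0 < a) :
    ∃ C₁ : ℝ, 1 ≤ C₁ ∧ ∀ c d : ℝ, c < d → ∀ f : ℝ → ℂ, ContDiffOn ℝ m f (Set.Icc c d) →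
      ∀ H : ℝ, 0 ≤ H →
      (∀ x ∈ Set.Icc c d, ∀ y ∈ Set.Icc c d,
        ‖iteratedDerivWithin m f (Set.Icc c d) x - iteratedDerivWithin m f (Set.Icc c d) y‖
          ≤ H * |x - y| ^ a) →
      ∀ V : ℝ, 0 ≤ V → (∀ x ∈ Set.Icc c d, ∀ y ∈ Set.Icc c d, ‖f x - f y‖ ≤ V) →
      ∀ t ∈ Set.Icc c d, ∀ s : ℕ, 1 ≤ s → s ≤ m →
        ‖iteratedDerivWithin s f (Set.Icc c d) t‖ ≤
          C₁ * (d - c) ^ (-(s:ℝ)) * (V + H * (d - c) ^ ((m:ℝ) + a)) := by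
  obtain ⟨CB, hCB1, hCB⟩ := coeffBound m
  have hCB0 : (0:ℝ) ≤ CB := le_trans zero_le_one hCB1
  refine ⟨(m ! : ℝ) * 2^m * CB, ?_, ?_⟩
  · have h1 : (1:ℝ) ≤ (m ! : ℝ) := by exact_mod_cast Nat.one_le_iff_ne_zero.mpr m.factorial_ne_zero
    have h2 : (1:ℝ) ≤ (2:ℝ)^m := one_le_pow₀ (by norm_num)
    have h3 : (1:ℝ) ≤ (m ! : ℝ) * 2^m := by nlinarith
    nlinarith
  intro c d hcd f hf H hH hHold V hV hVb t ht s hs1 hsm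
  obtain ⟨k, rfl⟩ : ∃ k, m = k + 1 := ⟨m - 1, (Nat.succ_pred_eq_of_pos hm).symm⟩
  have hpos : (0:ℝ) < d - c := by linarith
  have hf' : ContDiffOn ℝ ((k:ℕ∞)+1) f (Set.Icc c d) := by exact_mod_cast hf
  set τ : ℝ := (d - c)/2 with hτ
  have hτpos : 0 < τ := by positivity
  set e : ℝ := if t ≤ (c+d)/2 then 1 else -1 with he
  have habse : |e| = 1 := by
    by_cases h : t ≤ (c+d)/2 <;> simp [he, h]
  have hmap : ∀ u ∈ Set.Icc (0:ℝ) 1, t + e*τ*u ∈ Set.Icc c d := by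
    intro u hu
    obtain ⟨hu0, hu1⟩ := hu
    obtain ⟨ht1, ht2⟩ := ht
    have hτu0 : 0 ≤ τ * u := by positivity
    have hτu1 : τ * u ≤ τ := by nlinarith
    by_cases h : t ≤ (c+d)/2
    · rw [he, if_pos h]
      constructor <;> [nlinarith; nlinarith]
    · rw [he, if_neg h]
      push_neg at h
      constructor <;> [nlinarith; nlinarith]
  set bb : ℕ → ℂ := fun j => if j = 0 then 0 else
    (((e*τ)^j * ((j ! : ℝ))⁻¹ : ℝ) : ℂ) * (iteratedDerivWithin j f (Set.Icc c d) t) with hbb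
  set b : Fin (k+1+1) → ℂ := fun j => bb (j:ℕ) with hb
  have key : ∀ u ∈ Set.Icc (0:ℝ) 1, (∑ j : Fin (k+1+1), (u:ℂ)^(j:ℕ) * b j)
      = taylorWithinEval f (k+1) (Set.Icc c d) t (t + e*τ*u) - f t := by
    intro u hu
    rw [taylor_within_apply]
    rw [show (∑ j : Fin (k+1+1), (u:ℂ)^(j:ℕ) * b j)
        = ∑ j ∈ Finset.range (k+1+1), (u:ℂ)^j * bb j from
      Fin.sum_univ_eq_sum_range (fun j => (u:ℂ)^j * bb j) (k+1+1)]
    rw [Finset.sum_range_succ' (fun j => (u:ℂ)^j * bb j) (k+1),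
      Finset.sum_range_succ' (fun j =>
        (((j ! : ℝ))⁻¹ * (t + e*τ*u - t) ^ j) • iteratedDerivWithin j f (Set.Icc c d) t) (k+1)]
    simp only [pow_zero, one_mul, Nat.factorial_zero, Nat.cast_one, inv_one,
      iteratedDerivWithin_zero, hbb, if_pos rfl, mul_zero, add_zero, one_smul]
    rw [add_sub_cancel_right]
    apply Finset.sum_congr rfl
    intro j _
    rw [if_neg (Nat.succ_ne_zero j)]
    rw [Complex.real_smul]
    have h2 : (t + e*τ*u - t) = e*τ*u := by ring
    rw [h2]
    push_cast [mul_pow]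
    ring
  set M : ℝ := V + H * (d - c) ^ (((k+1:ℕ):ℝ) + a) with hM
  have hM0 : 0 ≤ M := by positivity
  have hMb : ∀ u : ℝ, u ∈ Set.Icc (0:ℝ) 1 → ‖∑ j : Fin (k+1+1), (u:ℂ)^(j:ℕ) * b j‖ ≤ M := by
    intro u hu
    rw [key u hu]
    have hy := hmap u hu
    have htay := taylor_holder ha hcd hf' hH hHold ht hy
    calc ‖taylorWithinEval f (k+1) (Set.Icc c d) t (t + e*τ*u) - f t‖
        = ‖(taylorWithinEval f (k+1) (Set.Icc c d) t (t + e*τ*u) - f (t + e*τ*u))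
            + (f (t + e*τ*u) - f t)‖ := by rw [sub_add_sub_cancel]
      _ ≤ ‖taylorWithinEval f (k+1) (Set.Icc c d) t (t + e*τ*u) - f (t + e*τ*u)‖
            + ‖f (t + e*τ*u) - f t‖ := norm_add_le _ _
      _ ≤ H * (d - c) ^ ((k:ℝ) + 1 + a) + V := by
          apply add_le_add
          · rw [norm_sub_rev]; exact htay
          · exact hVb _ hy _ ht
      _ = M := by rw [hM]; push_cast; ring
  have hbs := hCB b M hMb ⟨s, by omega⟩
  have hbnorm : ‖b ⟨s, by omega⟩‖
      = τ^s * ((s ! : ℝ))⁻¹ * ‖iteratedDerivWithin s f (Set.Icc c d) t‖ := by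
    simp only [hb, hbb]
    rw [if_neg (by omega)]
    rw [norm_mul, Complex.norm_real, Real.norm_eq_abs, abs_mul, abs_pow, abs_mul, habse,
      one_mul, abs_of_pos hτpos, abs_of_pos (by positivity : (0:ℝ) < ((s ! : ℝ))⁻¹)]
  rw [hbnorm] at hbs
  have hXle : ‖iteratedDerivWithin s f (Set.Icc c d) t‖
      ≤ (s ! : ℝ) * ((2:ℝ)^s / (d-c)^s) * (CB * M) := by
    have hfs : (0:ℝ) < (s ! : ℝ) := by exact_mod_cast s.factorial_pos
    calc ‖iteratedDerivWithin s f (Set.Icc c d) t‖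
        = (s ! : ℝ) * (τ^s)⁻¹ * (τ^s * ((s ! : ℝ))⁻¹ * ‖iteratedDerivWithin s f (Set.Icc c d) t‖) := by
          field_simp
      _ ≤ (s ! : ℝ) * (τ^s)⁻¹ * (CB * M) := by
          apply mul_le_mul_of_nonneg_left hbs (by positivity)
      _ = (s ! : ℝ) * ((2:ℝ)^s / (d-c)^s) * (CB * M) := by
          rw [hτ, div_pow]
          field_simp
  calc ‖iteratedDerivWithin s f (Set.Icc c d) t‖
      ≤ (s ! : ℝ) * ((2:ℝ)^s / (d-c)^s) * (CB * M) := hXle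
    _ ≤ ((k+1)! : ℝ) * ((2:ℝ)^(k+1) / (d-c)^s) * (CB * M) := by
        apply mul_le_mul_of_nonneg_right _ (by positivity)
        apply mul_le_mul
        · exact_mod_cast Nat.factorial_le hsm
        · apply div_le_div_of_nonneg_right _ (by positivity)
          exact pow_le_pow_right₀ (by norm_num) (by omega)
        · positivity
        · positivity
    _ = ((k+1)! : ℝ) * 2^(k+1) * CB * (d - c) ^ (-(s:ℝ)) * M := by
        rw [Real.rpow_neg hpos.le, Real.rpow_natCast]
        ring

end AuxInterp

/-- **Interpolation inequality.**
Let `m ≥ 1` and `a ∈ (0,1]`.  There is a constant `C = C(m,a)` such that for every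
bounded open interval `I = (α,β)` and every `f ∈ C^{m,a}(Ī)` (complex valued), for all
`t ∈ I` and `s = 1,…,m`:
`|f^{(s)}(t)| ≤ C |I|^{-s} (V_I(f) + V_I(f)^{(m+a-s)/(m+a)} · Höld_{a,I}(f^{(m)})^{s/(m+a)} · |I|^s)`,
where `V_I(f) = diam f(I)`. -/
theorem interpolation_inequality
    (m : ℕ) (hm : 1 ≤ m) (a : ℝ) (ha : 0 < a) (ha1 : a ≤ 1) :
    ∃ C : ℝ, 0 < C ∧
      ∀ α β : ℝ, α < β →
        ∀ f : ℝ → ℂ,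
          ContDiffOn ℝ m f (Set.Icc α β) →
          (∃ H : ℝ, 0 ≤ H ∧ ∀ x ∈ Set.Icc α β, ∀ y ∈ Set.Icc α β,
            ‖iteratedDerivWithin m f (Set.Icc α β) x -
              iteratedDerivWithin m f (Set.Icc α β) y‖ ≤ H * |x - y| ^ a) →
          ∀ t ∈ Set.Ioo α β, ∀ s : ℕ, 1 ≤ s → s ≤ m →
            ‖iteratedDerivWithin s f (Set.Icc α β) t‖ ≤
              C * (β - α) ^ (-(s : ℝ)) *
                (Metric.diam (f '' Set.Ioo α β) +
                  Metric.diam (f '' Set.Ioo α β) ^ (((m : ℝ) + a - s) / ((m : ℝ) + a)) *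
                    (holderConstOn a (iteratedDerivWithin m f (Set.Icc α β)) (Set.Icc α β)) ^
                      ((s : ℝ) / ((m : ℝ) + a)) *
                    (β - α) ^ (s : ℝ)) := by
  obtain ⟨C₁, hC1, hbase⟩ := base_est m hm a ha
  refine ⟨2 * C₁, by linarith, ?_⟩
  intro α β hαβ f hf hHold t ht s hs1 hsm
  set L := β - α with hLdef
  have hL0 : (0:ℝ) < L := by simp only [hLdef]; linarith
  set V := Metric.diam (f '' Set.Ioo α β) with hVdef
  have hV0 : 0 ≤ V := Metric.diam_nonneg
  set g := iteratedDerivWithin m f (Set.Icc α β) with hgdef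
  set Λ := holderConstOn a g (Set.Icc α β) with hΛdef
  obtain ⟨H, hH0, hHb⟩ := hHold
  have hSne : Set.Nonempty {C : ℝ | 0 ≤ C ∧ ∀ x ∈ Set.Icc α β, ∀ y ∈ Set.Icc α β,
      ‖g x - g y‖ ≤ C * |x - y| ^ a} := ⟨H, hH0, hHb⟩
  have hΛ0 : 0 ≤ Λ := le_csInf hSne (fun C hC => hC.1)
  have hΛb : ∀ x ∈ Set.Icc α β, ∀ y ∈ Set.Icc α β, ‖g x - g y‖ ≤ Λ * |x - y| ^ a := by
    intro x hx y hy
    rcases eq_or_ne x y with rfl | hxy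
    · simp [Real.zero_rpow ha.ne']
    · have hpow : 0 < |x - y| ^ a := Real.rpow_pos_of_pos (abs_pos.mpr (sub_ne_zero.mpr hxy)) a
      have hle : ‖g x - g y‖ / |x - y| ^ a ≤ Λ :=
        le_csInf hSne (fun C hC => (div_le_iff₀ hpow).mpr (hC.2 x hx y hy))
      calc ‖g x - g y‖ = (‖g x - g y‖ / |x - y| ^ a) * |x - y| ^ a := by field_simp
        _ ≤ Λ * |x - y| ^ a := mul_le_mul_of_nonneg_right hle hpow.le
  have hcont : ContinuousOn f (Set.Icc α β) := hf.continuousOn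
  have hVb : ∀ x ∈ Set.Icc α β, ∀ y ∈ Set.Icc α β, ‖f x - f y‖ ≤ V := by
    have hcomp := isCompact_Icc.image_of_continuousOn hcont
    have hcl : f '' Set.Icc α β ⊆ closure (f '' Set.Ioo α β) := by
      have := (hcont.mono (closure_Ioo hαβ.ne ▸ le_refl _ : closure (Set.Ioo α β) ⊆ Set.Icc α β)).image_closure
      rw [closure_Ioo hαβ.ne] at this
      exact this
    have hbd : Bornology.IsBounded (closure (f '' Set.Ioo α β)) := by
      apply Bornology.IsBounded.subset hcomp.isBounded
      exact closure_minimal (Set.image_mono Set.Ioo_subset_Icc_self) hcomp.isClosed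
    intro x hx y hy
    have h1 : dist (f x) (f y) ≤ Metric.diam (closure (f '' Set.Ioo α β)) :=
      Metric.dist_le_diam_of_mem hbd (hcl (Set.mem_image_of_mem f hx))
        (hcl (Set.mem_image_of_mem f hy))
    rw [Metric.diam_closure] at h1
    rwa [dist_eq_norm] at h1
  have claim : ∀ h : ℝ, 0 < h → h ≤ L → ‖iteratedDerivWithin s f (Set.Icc α β) t‖
      ≤ C₁ * h ^ (-(s:ℝ)) * (V + Λ * h ^ ((m:ℝ) + a)) := by
    intro h hh0 hhL
    simp only [hLdef] at hhL
    set c := max α (t - h) with hc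
    set d := c + h with hd
    have hαc : α ≤ c := le_max_left _ _
    have hct : c ≤ t := max_le ht.1.le (by linarith)
    have htd : t ≤ d := by
      rcases le_or_gt α (t - h) with h1 | h1
      · rw [hd, hc, max_eq_right h1]; linarith
      · rw [hd, hc, max_eq_left h1.le]; linarith
    have hdβ : d ≤ β := by
      rcases le_or_gt α (t - h) with h1 | h1
      · rw [hd, hc, max_eq_right h1]; linarith [ht.2]
      · rw [hd, hc, max_eq_left h1.le]; linarith
    have hcd : c < d := by rw [hd]; linarith
    have hsub : Set.Icc c d ⊆ Set.Icc α β := Set.Icc_subset_Icc hαc hdβ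
    have htm : t ∈ Set.Icc c d := ⟨hct, htd⟩
    have heq : ∀ x ∈ Set.Icc c d, ∀ j, j ≤ m →
        iteratedDerivWithin j f (Set.Icc c d) x = iteratedDerivWithin j f (Set.Icc α β) x :=
      fun x hx j hj => iterDeriv_subset hαβ hcd hsub hj hf hx
    have hbase' := hbase c d hcd f (hf.mono hsub) Λ hΛ0 ?_ V hV0 ?_ t htm s hs1 hsm
    · rw [heq t htm s hsm] at hbase'
      have hdc : d - c = h := by rw [hd]; ring
      rwa [hdc] at hbase'
    · intro x hx y hy
      rw [heq x hx m le_rfl, heq y hy m le_rfl]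
      exact hΛb x (hsub hx) y (hsub hy)
    · intro x hx y hy
      exact hVb x (hsub hx) y (hsub hy)
  have hexp0 : (0:ℝ) < (m:ℝ) + a := by positivity
  have hT2 : (0:ℝ) ≤ V ^ (((m:ℝ) + a - s) / ((m:ℝ) + a)) * Λ ^ ((s:ℝ) / ((m:ℝ) + a))
      * L ^ (s:ℝ) :=
    mul_nonneg (mul_nonneg (Real.rpow_nonneg hV0 _) (Real.rpow_nonneg hΛ0 _))
      (Real.rpow_nonneg hL0.le _)
  by_cases hcase : Λ * L ^ ((m:ℝ) + a) ≤ V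
  · have h1 := claim L hL0 le_rfl
    calc ‖iteratedDerivWithin s f (Set.Icc α β) t‖
        ≤ C₁ * L ^ (-(s:ℝ)) * (V + Λ * L ^ ((m:ℝ) + a)) := h1
      _ ≤ C₁ * L ^ (-(s:ℝ)) * (V + V) := by
          apply mul_le_mul_of_nonneg_left (by linarith)
            (mul_nonneg (by linarith) (Real.rpow_nonneg hL0.le _))
      _ = 2 * C₁ * L ^ (-(s:ℝ)) * V := by ring
      _ ≤ 2 * C₁ * L ^ (-(s:ℝ)) * (V + V ^ (((m:ℝ) + a - s) / ((m:ℝ) + a)) *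
            Λ ^ ((s:ℝ) / ((m:ℝ) + a)) * L ^ (s:ℝ)) := by
          apply mul_le_mul_of_nonneg_left (le_add_of_nonneg_right hT2)
            (mul_nonneg (by linarith) (Real.rpow_nonneg hL0.le _))
  · push_neg at hcase
    have hΛpos : 0 < Λ := by
      rcases lt_or_ge 0 Λ with h | h
      · exact h
      · exfalso
        have : Λ * L ^ ((m:ℝ) + a) ≤ 0 :=
          mul_nonpos_of_nonpos_of_nonneg h (Real.rpow_nonneg hL0.le _)
        linarith
    have hRHSnn : (0:ℝ) ≤ 2 * C₁ * L ^ (-(s:ℝ)) * (V + V ^ (((m:ℝ) + a - s) / ((m:ℝ) + a)) *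
        Λ ^ ((s:ℝ) / ((m:ℝ) + a)) * L ^ (s:ℝ)) :=
      mul_nonneg (mul_nonneg (by linarith) (Real.rpow_nonneg hL0.le _)) (by linarith)
    rcases eq_or_lt_of_le hV0 with hV0' | hVpos
    · -- V = 0
      have hDle : ‖iteratedDerivWithin s f (Set.Icc α β) t‖ ≤ 0 := by
        by_contra hD0
        push_neg at hD0
        set D := ‖iteratedDerivWithin s f (Set.Icc α β) t‖ with hDdef
        have hse : (0:ℝ) < (m:ℝ) + a - s := by
          have : (s:ℝ) ≤ (m:ℝ) := by exact_mod_cast hsm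
          linarith
        set r := D / (2 * C₁ * Λ) with hr
        have hrpos : 0 < r := by
          apply div_pos hD0
          positivity
        set h0 := min L (r ^ (1/((m:ℝ) + a - s))) with hh0
        have hh0pos : 0 < h0 := lt_min hL0 (Real.rpow_pos_of_pos hrpos _)
        have hcl := claim h0 hh0pos (min_le_left _ _)
        rw [← hV0'] at hcl
        have hpow : h0 ^ (-(s:ℝ)) * h0 ^ ((m:ℝ) + a) = h0 ^ ((m:ℝ) + a - s) := by
          rw [← Real.rpow_add hh0pos]
          congr 1
          ring
        have h0e : h0 ^ ((m:ℝ) + a - s) ≤ r := by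
          calc h0 ^ ((m:ℝ) + a - s) ≤ (r ^ (1/((m:ℝ) + a - s))) ^ ((m:ℝ) + a - s) :=
                Real.rpow_le_rpow hh0pos.le (min_le_right _ _) hse.le
            _ = r := by
                rw [← Real.rpow_mul hrpos.le, one_div, inv_mul_cancel₀ hse.ne', Real.rpow_one]
        have : D ≤ C₁ * Λ * (h0 ^ ((m:ℝ) + a - s)) := by
          calc D ≤ C₁ * h0 ^ (-(s:ℝ)) * (0 + Λ * h0 ^ ((m:ℝ) + a)) := hcl
            _ = C₁ * Λ * (h0 ^ (-(s:ℝ)) * h0 ^ ((m:ℝ) + a)) := by ring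
            _ = C₁ * Λ * (h0 ^ ((m:ℝ) + a - s)) := by rw [hpow]
        have hfin : D ≤ D / 2 := by
          have h2 : C₁ * Λ * (h0 ^ ((m:ℝ) + a - s)) ≤ C₁ * Λ * r :=
            mul_le_mul_of_nonneg_left h0e (by positivity)
          have h3 : C₁ * Λ * r = D / 2 := by
            rw [hr]
            field_simp
          linarith
        linarith
      exact le_trans hDle hRHSnn
    · -- V > 0
      set h0 := (V/Λ) ^ (1/((m:ℝ) + a)) with hh0
      have hVΛpos : 0 < V / Λ := div_pos hVpos hΛpos
      have hh0pos : 0 < h0 := Real.rpow_pos_of_pos hVΛpos _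
      have hh0L : h0 ≤ L := by
        have h1 : V / Λ ≤ L ^ ((m:ℝ) + a) := by
          rw [div_le_iff₀ hΛpos]
          nlinarith [hcase]
        calc h0 ≤ (L ^ ((m:ℝ) + a)) ^ (1/((m:ℝ) + a)) :=
              Real.rpow_le_rpow hVΛpos.le h1 (by positivity)
          _ = L := by
              rw [← Real.rpow_mul hL0.le, mul_one_div, div_self hexp0.ne', Real.rpow_one]
      have hcl := claim h0 hh0pos hh0L
      have hΛh : Λ * h0 ^ ((m:ℝ) + a) = V := by
        have : h0 ^ ((m:ℝ) + a) = V / Λ := by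
          rw [hh0, ← Real.rpow_mul hVΛpos.le, one_div, inv_mul_cancel₀ hexp0.ne', Real.rpow_one]
        rw [this]
        field_simp
      rw [hΛh] at hcl
      have hkey : V * h0 ^ (-(s:ℝ)) = V ^ (((m:ℝ) + a - s) / ((m:ℝ) + a)) *
          Λ ^ ((s:ℝ) / ((m:ℝ) + a)) := by
        have e1 : h0 ^ (-(s:ℝ)) = (V/Λ) ^ (-((s:ℝ)/((m:ℝ) + a))) := by
          rw [hh0, ← Real.rpow_mul hVΛpos.le]
          congr 1
          field_simp
        have e2 : (V/Λ) ^ (-((s:ℝ)/((m:ℝ) + a))) = V ^ (-((s:ℝ)/((m:ℝ) + a))) *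
            Λ ^ ((s:ℝ)/((m:ℝ) + a)) := by
          rw [Real.div_rpow hV0 hΛpos.le, Real.rpow_neg hΛpos.le, div_eq_mul_inv, inv_inv]
        have e3 : V * V ^ (-((s:ℝ)/((m:ℝ) + a))) = V ^ (((m:ℝ) + a - s) / ((m:ℝ) + a)) := by
          nth_rewrite 1 [← Real.rpow_one V]
          rw [← Real.rpow_add hVpos]
          congr 1
          field_simp
          ring
        rw [e1, e2, ← mul_assoc, e3]
      have hLs : L ^ (-(s:ℝ)) * L ^ ((s:ℝ)) = 1 := by
        rw [← Real.rpow_add hL0]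
        simp
      calc ‖iteratedDerivWithin s f (Set.Icc α β) t‖
          ≤ C₁ * h0 ^ (-(s:ℝ)) * (V + V) := hcl
        _ = 2 * C₁ * (V * h0 ^ (-(s:ℝ))) := by ring
        _ = 2 * C₁ * (V ^ (((m:ℝ) + a - s) / ((m:ℝ) + a)) * Λ ^ ((s:ℝ) / ((m:ℝ) + a))) := by
            rw [hkey]
        _ = 2 * C₁ * (V ^ (((m:ℝ) + a - s) / ((m:ℝ) + a)) * Λ ^ ((s:ℝ) / ((m:ℝ) + a))) *
              (L ^ (-(s:ℝ)) * L ^ ((s:ℝ))) := by rw [hLs, mul_one]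
        _ = 2 * C₁ * L ^ (-(s:ℝ)) * (V ^ (((m:ℝ) + a - s) / ((m:ℝ) + a)) *
              Λ ^ ((s:ℝ) / ((m:ℝ) + a)) * L ^ ((s:ℝ))) := by ring
        _ ≤ 2 * C₁ * L ^ (-(s:ℝ)) * (V + V ^ (((m:ℝ) + a - s) / ((m:ℝ) + a)) *
              Λ ^ ((s:ℝ) / ((m:ℝ) + a)) * L ^ ((s:ℝ))) := by
            apply mul_le_mul_of_nonneg_left (le_add_of_nonneg_left hV0)
              (mul_nonneg (by linarith) (Real.rpow_nonneg hL0.le _))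
end
end

section
/- Let G be a finite group and G ⟳ V a representation on a finite-dimensional complex vector space with V^G = {0}, σ = (σ_1,…,σ_n) homogeneous basic invariants of degrees d_j, d = max_j d_j. Let a ∈ C^{d−1,1}([α,β], ℂ^n) take values in σ(V), with continuous selections â_j of a_j^{1/d_j}, and let 0 < B < 1/3. Let t₀ ∈ (α,β) and k satisfy |â_k(t₀)| = max_j |â_j(t₀)| ≠ 0, and let I be an open interval with t₀ ∈ I ⊆ (α,β) such that M|I| + Σ_j ‖â_j′‖_{L^1(I)} ≤ B|â_k(t₀)|, where M := max_{1≤j≤n} (Lip_I(a_j^{(d−1)}))^{1/d} |â_k(t₀)|^{(d−d_j)/d}. Then there is a constant C depending only on d (and B) such that for all j = 1,…,n and s = 1,…,d−1: ‖a_j^{(s)}‖_{L^∞(I)} ≤ C |I|^{−s} |â_k(t₀)|^{d_j} and Lip_I(a_j^{(d−1)}) ≤ C |I|^{−d} |â_k(t₀)|^{d_j}. -/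
open MeasureTheory Set
open scoped ENNReal NNReal

noncomputable section

lemma lipConstOn_nonneg {E : Type*} [NormedAddCommGroup E] (f : ℝ → E) (s : Set ℝ) :
    0 ≤ lipConstOn f s :=
  Real.sInf_nonneg (fun _ hx => hx.1)

lemma lipConstOn_spec {E : Type*} [NormedAddCommGroup E] {f : ℝ → E} {s : Set ℝ}
    (hne : ∃ C : ℝ, 0 ≤ C ∧ ∀ x ∈ s, ∀ y ∈ s, ‖f x - f y‖ ≤ C * |x - y|) :
    ∀ x ∈ s, ∀ y ∈ s, ‖f x - f y‖ ≤ lipConstOn f s * |x - y| := by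
  intro x hx y hy
  rcases eq_or_ne x y with rfl | hxy
  · simp
  have habs : 0 < |x - y| := abs_pos.2 (sub_ne_zero.2 hxy)
  have hbdd : BddBelow {C : ℝ | 0 ≤ C ∧ ∀ x ∈ s, ∀ y ∈ s, ‖f x - f y‖ ≤ C * |x - y|} :=
    ⟨0, fun _ hC => hC.1⟩
  refine le_of_forall_pos_le_add (fun ε hε => ?_)
  have hlt : sInf {C : ℝ | 0 ≤ C ∧ ∀ x ∈ s, ∀ y ∈ s, ‖f x - f y‖ ≤ C * |x - y|}
      < lipConstOn f s + ε / |x - y| := by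
    have : 0 < ε / |x - y| := div_pos hε habs
    simp only [lipConstOn]; linarith
  obtain ⟨C, hC, hClt⟩ := (csInf_lt_iff hbdd hne).1 hlt
  calc ‖f x - f y‖ ≤ C * |x - y| := hC.2 x hx y hy
    _ ≤ (lipConstOn f s + ε / |x - y|) * |x - y| := by
        apply mul_le_mul_of_nonneg_right hClt.le habs.le
    _ = lipConstOn f s * |x - y| + ε := by field_simp

/-- MVT-based lemma: existence of a point where the s-th derivative is small. -/
lemma exists_point_small_deriv (S : ℕ) (g : ℕ → ℝ → ℝ) (γ δ A : ℝ)
    (hder : ∀ i, i < S → ∀ t ∈ Ioo γ δ, HasDerivAt (g i) (g (i + 1) t) t)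
    (hbound : ∀ t ∈ Ioo γ δ, |g 0 t| ≤ A) :
    ∀ s, s ≤ S → ∀ u v : ℝ, γ ≤ u → u < v → v ≤ δ →
      ∃ ξ ∈ Ioo u v, |g s ξ| * (v - u) ^ s ≤ 6 ^ (s * s) * A := by
  intro s
  induction s with
  | zero =>
    intro _ u v hγu huv hvδ
    refine ⟨(u + v) / 2, ⟨by linarith, by linarith⟩, ?_⟩
    have : (u + v) / 2 ∈ Ioo γ δ := ⟨by linarith, by linarith⟩
    simpa using hbound _ this
  | succ s ih =>
    intro hs u v hγu huv hvδ
    have hsS : s ≤ S := by omega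
    have hsltS : s < S := by omega
    set w : ℝ := (v - u) / 3 with hw_def
    have hw : 0 < w := by simp only [hw_def]; linarith
    have hA : 0 ≤ A := by
      have hmid : (u + v) / 2 ∈ Ioo γ δ := ⟨by linarith, by linarith⟩
      exact le_trans (abs_nonneg _) (hbound _ hmid)
    obtain ⟨ξ₁, hξ₁, H₁⟩ := ih hsS u (u + w) hγu (by linarith) (by simp only [hw_def]; linarith)
    obtain ⟨ξ₂, hξ₂, H₂⟩ := ih hsS (v - w) v (by simp only [hw_def]; linarith) (by linarith)
      hvδ
    rw [add_sub_cancel_left] at H₁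
    rw [sub_sub_cancel] at H₂
    have hlt : ξ₁ < ξ₂ := by
      have h1 : ξ₁ < u + w := hξ₁.2
      have h2 : v - w < ξ₂ := hξ₂.1
      have : u + w ≤ v - w := by simp only [hw_def]; linarith
      linarith
    have hsubI : Icc ξ₁ ξ₂ ⊆ Ioo γ δ := by
      intro x hx
      constructor
      · have := hξ₁.1; have := hx.1; linarith
      · have := hξ₂.2; have := hx.2; linarith
    obtain ⟨ξ, hξ, hslope⟩ := exists_hasDerivAt_eq_slope (g s) (g (s + 1)) hlt
      (fun x hx => ((hder s hsltS x (hsubI hx)).continuousAt).continuousWithinAt)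
      (fun x hx => hder s hsltS x (hsubI (Ioo_subset_Icc_self hx)))
    have hξuv : ξ ∈ Ioo u v := by
      constructor
      · have := hξ₁.1; have := hξ.1; linarith
      · have := hξ₂.2; have := hξ.2; linarith
    refine ⟨ξ, hξuv, ?_⟩
    have hgap : w ≤ ξ₂ - ξ₁ := by
      have h1 : ξ₁ < u + w := hξ₁.2
      have h2 : v - w < ξ₂ := hξ₂.1
      have : u + w ≤ v - w := by simp only [hw_def]; linarith
      linarith
    have hd12 : 0 < ξ₂ - ξ₁ := by linarith
    have key1 : |g (s + 1) ξ| * (ξ₂ - ξ₁) ≤ |g s ξ₂| + |g s ξ₁| := by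
      rw [hslope, abs_div, abs_of_pos hd12, div_mul_cancel₀ _ hd12.ne']
      exact abs_sub _ _
    -- |g(s+1) ξ| * w^(s+1) ≤ 2 * 6^(s*s) * A
    have hwpow : (0:ℝ) < w ^ s := pow_pos hw s
    have key2 : |g (s + 1) ξ| * w ^ (s + 1) ≤ 2 * 6 ^ (s * s) * A := by
      have h1 : |g (s + 1) ξ| * w ^ (s + 1) ≤ |g (s + 1) ξ| * (ξ₂ - ξ₁) * w ^ s := by
        rw [pow_succ]
        calc |g (s + 1) ξ| * (w ^ s * w) = |g (s + 1) ξ| * w * w ^ s := by ring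
          _ ≤ |g (s + 1) ξ| * (ξ₂ - ξ₁) * w ^ s := by
              apply mul_le_mul_of_nonneg_right _ hwpow.le
              exact mul_le_mul_of_nonneg_left hgap (abs_nonneg _)
      calc |g (s + 1) ξ| * w ^ (s + 1) ≤ |g (s + 1) ξ| * (ξ₂ - ξ₁) * w ^ s := h1
        _ ≤ (|g s ξ₂| + |g s ξ₁|) * w ^ s := mul_le_mul_of_nonneg_right key1 hwpow.le
        _ = |g s ξ₂| * w ^ s + |g s ξ₁| * w ^ s := by ring
        _ ≤ 6 ^ (s * s) * A + 6 ^ (s * s) * A := add_le_add H₂ H₁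
        _ = 2 * 6 ^ (s * s) * A := by ring
    have hvu : v - u = 3 * w := by simp only [hw_def]; ring
    have hnum : (2:ℝ) * 3 ^ (s + 1) * 6 ^ (s * s) ≤ 6 ^ ((s + 1) * (s + 1)) := by
      have h1 : (s + 1) * (s + 1) = s * s + (2 * s + 1) := by ring
      rw [h1, pow_add (6:ℝ) (s * s) (2 * s + 1)]
      rw [mul_comm ((6:ℝ) ^ (s * s)) _]
      apply mul_le_mul_of_nonneg_right _ (by positivity)
      have h2 : (2:ℝ) * 3 ^ (s + 1) ≤ 6 ^ (s + 1) := by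
        have : (6:ℝ) ^ (s + 1) = 2 ^ (s + 1) * 3 ^ (s + 1) := by
          rw [← mul_pow]; norm_num
        rw [this]
        apply mul_le_mul_of_nonneg_right _ (by positivity)
        calc (2:ℝ) = 2 ^ 1 := (pow_one 2).symm
          _ ≤ 2 ^ (s + 1) := pow_le_pow_right₀ (by norm_num) (by omega)
      calc (2:ℝ) * 3 ^ (s + 1) ≤ 6 ^ (s + 1) := h2
        _ ≤ 6 ^ (2 * s + 1) := pow_le_pow_right₀ (by norm_num) (by omega)
    calc |g (s + 1) ξ| * (v - u) ^ (s + 1)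
        = 3 ^ (s + 1) * (|g (s + 1) ξ| * w ^ (s + 1)) := by rw [hvu, mul_pow]; ring
      _ ≤ 3 ^ (s + 1) * (2 * 6 ^ (s * s) * A) :=
          mul_le_mul_of_nonneg_left key2 (by positivity)
      _ = (2 * 3 ^ (s + 1) * 6 ^ (s * s)) * A := by ring
      _ ≤ 6 ^ ((s + 1) * (s + 1)) * A := mul_le_mul_of_nonneg_right hnum hA

/-- A continuous selection of a `q`-th root of a differentiable function is differentiable
at points where it does not vanish. -/
lemma root_differentiableAt (q : ℕ) (hq : 1 ≤ q) (g f : ℝ → ℂ) {U : Set ℝ} (hU : IsOpen U)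
    (hg : ContinuousOn g U) (hgf : ∀ t ∈ U, g t ^ q = f t) {u : ℝ} (hu : u ∈ U)
    (hf : DifferentiableAt ℝ f u) (h0 : g u ≠ 0) : DifferentiableAt ℝ g u := by
  have hpow : HasStrictDerivAt (fun z : ℂ => z ^ q) ((q : ℂ) * (g u) ^ (q - 1)) (g u) :=
    hasStrictDerivAt_pow q (g u)
  have hne : (q : ℂ) * (g u) ^ (q - 1) ≠ 0 := by
    apply mul_ne_zero
    · exact_mod_cast Nat.pos_of_ne_zero (by omega) |>.ne'
    · exact pow_ne_zero _ h0
  set φ : ℂ → ℂ := hpow.localInverse _ _ _ hne with hφ_def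
  have hφdiff : HasStrictDerivAt φ ((q : ℂ) * (g u) ^ (q - 1))⁻¹ ((g u) ^ q) :=
    hpow.to_localInverse hne
  have hleft : ∀ᶠ z in nhds (g u), φ (z ^ q) = z :=
    (hpow.hasStrictFDerivAt_equiv hne).eventually_left_inverse
  have hgC : ContinuousAt g u := hg.continuousAt (hU.mem_nhds hu)
  have h1 : ∀ᶠ t in nhds u, φ (g t ^ q) = g t := hgC.tendsto.eventually hleft
  have h2 : ∀ᶠ t in nhds u, g t ^ q = f t :=
    Filter.eventually_of_mem (hU.mem_nhds hu) hgf
  have heq : g =ᶠ[nhds u] fun t => φ (f t) := by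
    filter_upwards [h1, h2] with t ht1 ht2
    rw [← ht1, ht2]
  have hcomp : DifferentiableAt ℝ (fun t => φ (f t)) u := by
    have hφd : DifferentiableAt ℂ φ (f u) := by
      have : f u = (g u) ^ q := (hgf u hu).symm
      rw [this]
      exact hφdiff.hasDerivAt.differentiableAt
    exact (hφd.restrictScalars ℝ).comp u hf
  exact (Filter.EventuallyEq.differentiableAt_iff heq).mpr hcomp

/-- Bound on a continuous root selection in terms of the `L¹` norm of its derivative. -/
lemma root_selection_bound (q : ℕ) (hq : 1 ≤ q) (g f : ℝ → ℂ) (α β γ δ : ℝ)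
    (hγδ : γ < δ)
    (hsub : Ioo γ δ ⊆ Ioo α β)
    (hg : ContinuousOn g (Ioo α β))
    (hgf : ∀ t ∈ Ioo α β, g t ^ q = f t)
    (hf : ∀ t ∈ Ioo α β, DifferentiableAt ℝ f t)
    (hint : IntegrableOn (deriv g) (Ioo α β))
    {x y : ℝ} (hx : x ∈ Ioo γ δ) (hy : y ∈ Ioo γ δ) :
    ‖g x‖ ≤ ‖g y‖ + ∫ t in Ioo γ δ, ‖deriv g t‖ := by
  set J : ℝ := ∫ t in Ioo γ δ, ‖deriv g t‖ with hJ_def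
  have hintγδ : IntegrableOn (deriv g) (Ioo γ δ) := hint.mono_set hsub
  have hJ0 : 0 ≤ J := by
    apply setIntegral_nonneg measurableSet_Ioo
    intro t _; exact norm_nonneg _
  have hgd : ∀ u ∈ Ioo α β, g u ≠ 0 → HasDerivAt g (deriv g u) u := fun u hu h0 =>
    (root_differentiableAt q hq g f isOpen_Ioo hg hgf hu (hf u hu) h0).hasDerivAt
  -- claim A : FTC on zero-free subintervals
  have claimA : ∀ u v : ℝ, u ∈ Ioo γ δ → v ∈ Ioo γ δ → u ≤ v →
      (∀ t ∈ Icc u v, g t ≠ 0) → ‖g v - g u‖ ≤ J := by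
    intro u v hu hv huv hne
    have hIccsub : Icc u v ⊆ Ioo γ δ := fun t ht =>
      ⟨lt_of_lt_of_le hu.1 ht.1, lt_of_le_of_lt ht.2 hv.2⟩
    have hIocsub : Ioc u v ⊆ Ioo γ δ := fun t ht => hIccsub (Ioc_subset_Icc_self ht)
    have hii : IntervalIntegrable (deriv g) volume u v := by
      rw [intervalIntegrable_iff_integrableOn_Ioc_of_le huv]
      exact hintγδ.mono_set hIocsub
    have hderiv : ∀ t ∈ uIcc u v, HasDerivAt g (deriv g t) t := by
      intro t ht
      rw [uIcc_of_le huv] at ht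
      exact hgd t (hsub (hIccsub ht)) (hne t ht)
    have hftc : ∫ t in u..v, deriv g t = g v - g u :=
      intervalIntegral.integral_eq_sub_of_hasDerivAt hderiv hii
    rw [← hftc]
    calc ‖∫ t in u..v, deriv g t‖ ≤ ∫ t in u..v, ‖deriv g t‖ :=
          intervalIntegral.norm_integral_le_integral_norm huv
      _ = ∫ t in Ioc u v, ‖deriv g t‖ := by
          rw [intervalIntegral.integral_of_le huv]
      _ ≤ J := by
          apply setIntegral_mono_set hintγδ.norm
          · exact Filter.Eventually.of_forall (fun t => norm_nonneg _)
          · exact HasSubset.Subset.eventuallyLE hIocsub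
  have hIccyx : ∀ {u v : ℝ}, u ∈ Ioo γ δ → v ∈ Ioo γ δ → Icc u v ⊆ Ioo γ δ := by
    intro u v hu hv t ht
    exact ⟨lt_of_lt_of_le hu.1 ht.1, lt_of_le_of_lt ht.2 hv.2⟩
  rcases le_total y x with hyx | hxy
  · -- y ≤ x
    by_cases hZ : ∀ t ∈ Icc y x, g t ≠ 0
    · have h1 := claimA y x hy hx hyx hZ
      have h2 := norm_sub_norm_le (g x) (g y)
      linarith
    · push_neg at hZ
      obtain ⟨z, hzmem, hz0⟩ := hZ
      set Z : Set ℝ := Icc y x ∩ g ⁻¹' {0} with hZ_def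
      have hZne : Z.Nonempty := ⟨z, hzmem, by simpa using hz0⟩
      have hZbdd : BddAbove Z := BddAbove.mono (fun t ht => ht.1) bddAbove_Icc
      have hZclosed : IsClosed Z := by
        apply ContinuousOn.preimage_isClosed_of_isClosed
          (hg.mono (fun t ht => hsub (hIccyx hy hx ht))) isClosed_Icc isClosed_singleton
      set z₂ : ℝ := sSup Z with hz₂_def
      have hz₂mem : z₂ ∈ Z := hZclosed.csSup_mem hZne hZbdd
      have hgz₂ : g z₂ = 0 := by simpa using hz₂mem.2
      have hz₂Icc : z₂ ∈ Icc y x := hz₂mem.1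
      have hz₂Ioo : z₂ ∈ Ioo γ δ := hIccyx hy hx hz₂Icc
      rcases eq_or_lt_of_le hz₂Icc.2 with heq | hlt
      · rw [heq] at hgz₂
        rw [hgz₂]
        simp only [norm_zero]
        positivity
      · -- z₂ < x
        have hstep : ∀ w ∈ Ioc z₂ x, ‖g x - g w‖ ≤ J := by
          intro w hw
          have hwIoo : w ∈ Ioo γ δ := ⟨lt_trans hz₂Ioo.1 hw.1, lt_of_le_of_lt hw.2 hx.2⟩
          apply claimA w x hwIoo hx hw.2
          intro t ht
          intro hgt0
          have htZ : t ∈ Z := by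
            refine ⟨⟨le_trans hz₂Icc.1 (le_trans hw.1.le ht.1), ht.2⟩, by simpa using hgt0⟩
          have : t ≤ z₂ := le_csSup hZbdd htZ
          have : z₂ < t := lt_of_lt_of_le hw.1 ht.1
          linarith
        have hcts : ContinuousAt g z₂ := hg.continuousAt (isOpen_Ioo.mem_nhds (hsub hz₂Ioo))
        have htend : Filter.Tendsto (fun w => ‖g x - g w‖) (nhdsWithin z₂ (Ioi z₂))
            (nhds ‖g x - g z₂‖) := by
          apply Filter.Tendsto.norm
          apply Filter.Tendsto.const_sub
          exact hcts.tendsto.mono_left nhdsWithin_le_nhds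
        have hev : ∀ᶠ w in nhdsWithin z₂ (Ioi z₂), ‖g x - g w‖ ≤ J := by
          filter_upwards [Ioc_mem_nhdsGT hlt] with w hw using hstep w hw
        have hfinal : ‖g x - g z₂‖ ≤ J := le_of_tendsto htend hev
        rw [hgz₂, sub_zero] at hfinal
        have := norm_nonneg (g y)
        linarith
  · -- x ≤ y
    by_cases hZ : ∀ t ∈ Icc x y, g t ≠ 0
    · have h1 := claimA x y hx hy hxy hZ
      rw [norm_sub_rev] at h1
      have h2 := norm_sub_norm_le (g x) (g y)
      linarith
    · push_neg at hZ
      obtain ⟨z, hzmem, hz0⟩ := hZ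
      set Z : Set ℝ := Icc x y ∩ g ⁻¹' {0} with hZ_def
      have hZne : Z.Nonempty := ⟨z, hzmem, by simpa using hz0⟩
      have hZbdd : BddBelow Z := BddBelow.mono (fun t ht => ht.1) bddBelow_Icc
      have hZclosed : IsClosed Z := by
        apply ContinuousOn.preimage_isClosed_of_isClosed
          (hg.mono (fun t ht => hsub (hIccyx hx hy ht))) isClosed_Icc isClosed_singleton
      set z₁ : ℝ := sInf Z with hz₁_def
      have hz₁mem : z₁ ∈ Z := hZclosed.csInf_mem hZne hZbdd
      have hgz₁ : g z₁ = 0 := by simpa using hz₁mem.2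
      have hz₁Icc : z₁ ∈ Icc x y := hz₁mem.1
      have hz₁Ioo : z₁ ∈ Ioo γ δ := hIccyx hx hy hz₁Icc
      rcases eq_or_lt_of_le hz₁Icc.1 with heq | hlt
      · rw [← heq] at hgz₁
        rw [hgz₁]
        simp only [norm_zero]
        positivity
      · -- x < z₁
        have hstep : ∀ w ∈ Ico x z₁, ‖g w - g x‖ ≤ J := by
          intro w hw
          have hwIoo : w ∈ Ioo γ δ := ⟨lt_of_lt_of_le hx.1 hw.1, lt_trans hw.2 hz₁Ioo.2⟩
          apply claimA x w hx hwIoo hw.1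
          intro t ht
          intro hgt0
          have htZ : t ∈ Z := by
            refine ⟨⟨ht.1, le_trans ht.2 (le_trans hw.2.le hz₁Icc.2)⟩, by simpa using hgt0⟩
          have : z₁ ≤ t := csInf_le hZbdd htZ
          have : t < z₁ := lt_of_le_of_lt ht.2 hw.2
          linarith
        have hcts : ContinuousAt g z₁ := hg.continuousAt (isOpen_Ioo.mem_nhds (hsub hz₁Ioo))
        have htend : Filter.Tendsto (fun w => ‖g w - g x‖) (nhdsWithin z₁ (Iio z₁))
            (nhds ‖g z₁ - g x‖) := by
          apply Filter.Tendsto.norm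
          apply Filter.Tendsto.sub_const
          exact hcts.tendsto.mono_left nhdsWithin_le_nhds
        have hev : ∀ᶠ w in nhdsWithin z₁ (Iio z₁), ‖g w - g x‖ ≤ J := by
          filter_upwards [Ico_mem_nhdsLT hlt] with w hw using hstep w hw
        have hfinal : ‖g z₁ - g x‖ ≤ J := le_of_tendsto htend hev
        rw [hgz₁] at hfinal
        rw [norm_sub_rev, sub_zero] at hfinal
        have := norm_nonneg (g y)
        linarith

/-- Interpolation: sup bounds on intermediate derivatives. -/
lemma sup_deriv_bound (m : ℕ) (hm : 1 ≤ m) (F : ℕ → ℝ → ℂ) (γ δ A L : ℝ) (hγδ : γ < δ)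
    (hA : 0 ≤ A) (hL : 0 ≤ L)
    (hder : ∀ i, i < m → ∀ t ∈ Ioo γ δ, HasDerivAt (F i) (F (i + 1) t) t)
    (hbound : ∀ t ∈ Ioo γ δ, ‖F 0 t‖ ≤ A)
    (hlip : ∀ x ∈ Ioo γ δ, ∀ y ∈ Ioo γ δ, ‖F m x - F m y‖ ≤ L * |x - y|) :
    ∀ s, 1 ≤ s → s ≤ m → ∀ t ∈ Ioo γ δ,
      ‖F s t‖ * (δ - γ) ^ s ≤ (2 * 6 ^ (m * m) + 2) ^ (m + 1) * (A + L * (δ - γ) ^ (m + 1)) := by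
  set h : ℝ := δ - γ with hh_def
  have hh : 0 < h := by simp only [hh_def]; linarith
  set CC : ℝ := 2 * 6 ^ (m * m) + 2 with hCC_def
  have hCC1 : (1:ℝ) ≤ CC := by
    have : (1:ℝ) ≤ 6 ^ (m * m) := one_le_pow₀ (by norm_num)
    simp only [hCC_def]; linarith
  set E : ℝ := A + L * h ^ (m + 1) with hE_def
  have hE : 0 ≤ E := by positivity
  have hAE : A ≤ E := by
    have : 0 ≤ L * h ^ (m + 1) := by positivity
    simp only [hE_def]; linarith
  -- real-part chains
  have hre : ∀ i, i < m → ∀ t ∈ Ioo γ δ,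
      HasDerivAt (fun t => (F i t).re) ((F (i + 1) t).re) t := fun i hi t ht =>
    (Complex.reCLM.hasFDerivAt.comp_hasDerivAt t (hder i hi t ht))
  have him : ∀ i, i < m → ∀ t ∈ Ioo γ δ,
      HasDerivAt (fun t => (F i t).im) ((F (i + 1) t).im) t := fun i hi t ht =>
    (Complex.imCLM.hasFDerivAt.comp_hasDerivAt t (hder i hi t ht))
  have hbre : ∀ t ∈ Ioo γ δ, |(F 0 t).re| ≤ A := fun t ht =>
    le_trans (Complex.abs_re_le_norm _) (by simpa using hbound t ht)
  have hbim : ∀ t ∈ Ioo γ δ, |(F 0 t).im| ≤ A := fun t ht =>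
    le_trans (Complex.abs_im_le_norm _) (by simpa using hbound t ht)
  have xire := exists_point_small_deriv m (fun i t => (F i t).re) γ δ A hre hbre
  have xiim := exists_point_small_deriv m (fun i t => (F i t).im) γ δ A him hbim
  have habs_le : ∀ x ∈ Ioo γ δ, ∀ y ∈ Ioo γ δ, |x - y| ≤ h := by
    intro x hx y hy
    rw [abs_sub_le_iff]
    constructor <;> [skip; skip] <;> simp only [hh_def] <;>
      [linarith [hx.2, hy.1]; linarith [hy.2, hx.1]]
  have hnormReIm : ∀ z : ℂ, ‖z‖ ≤ |z.re| + |z.im| := fun z => by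
    exact Complex.norm_le_abs_re_add_abs_im z
  have h6m : (0:ℝ) < 6 ^ (m * m) := by positivity
  -- main claim by induction on j where s + j = m
  have main : ∀ j s, s + j = m → 1 ≤ s → ∀ t ∈ Ioo γ δ,
      ‖F s t‖ * h ^ s ≤ CC ^ (j + 1) * E := by
    intro j
    induction j with
    | zero =>
      intro s hsm _ t ht
      have hsm' : s = m := by omega
      subst hsm'
      obtain ⟨ξr, hξr, Hr⟩ := xire s le_rfl γ δ le_rfl hγδ le_rfl
      obtain ⟨ξi, hξi, Hi⟩ := xiim s le_rfl γ δ le_rfl hγδ le_rfl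
      have hhr : |(F s t).re| * h ^ s ≤ 6 ^ (s * s) * A + L * h ^ (s + 1) := by
        have h1 : |(F s t).re| ≤ |(F s ξr).re| + ‖F s t - F s ξr‖ := by
          have h2 : |(F s t).re - (F s ξr).re| ≤ ‖F s t - F s ξr‖ := by
            have := Complex.abs_re_le_norm (F s t - F s ξr)
            simpa [Complex.sub_re] using this
          have h0 := abs_sub_abs_le_abs_sub (F s t).re (F s ξr).re
          linarith
        have h2 : ‖F s t - F s ξr‖ ≤ L * h := by
          calc ‖F s t - F s ξr‖ ≤ L * |t - ξr| := hlip t ht ξr hξr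
            _ ≤ L * h := mul_le_mul_of_nonneg_left (habs_le t ht ξr hξr) hL
        calc |(F s t).re| * h ^ s ≤ (|(F s ξr).re| + L * h) * h ^ s := by
              apply mul_le_mul_of_nonneg_right _ (by positivity)
              linarith
          _ = |(F s ξr).re| * h ^ s + L * (h * h ^ s) := by ring
          _ ≤ 6 ^ (s * s) * A + L * h ^ (s + 1) := by
              rw [pow_succ]
              have : L * (h * h ^ s) = L * (h ^ s * h) := by ring
              rw [this]
              exact add_le_add Hr le_rfl
      have hhi : |(F s t).im| * h ^ s ≤ 6 ^ (s * s) * A + L * h ^ (s + 1) := by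
        have h1 : |(F s t).im| ≤ |(F s ξi).im| + ‖F s t - F s ξi‖ := by
          have h2 : |(F s t).im - (F s ξi).im| ≤ ‖F s t - F s ξi‖ := by
            have := Complex.abs_im_le_norm (F s t - F s ξi)
            simpa [Complex.sub_im] using this
          have h0 := abs_sub_abs_le_abs_sub (F s t).im (F s ξi).im
          linarith
        have h2 : ‖F s t - F s ξi‖ ≤ L * h := by
          calc ‖F s t - F s ξi‖ ≤ L * |t - ξi| := hlip t ht ξi hξi
            _ ≤ L * h := mul_le_mul_of_nonneg_left (habs_le t ht ξi hξi) hL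
        calc |(F s t).im| * h ^ s ≤ (|(F s ξi).im| + L * h) * h ^ s := by
              apply mul_le_mul_of_nonneg_right _ (by positivity)
              linarith
          _ = |(F s ξi).im| * h ^ s + L * (h * h ^ s) := by ring
          _ ≤ 6 ^ (s * s) * A + L * h ^ (s + 1) := by
              rw [pow_succ]
              have : L * (h * h ^ s) = L * (h ^ s * h) := by ring
              rw [this]
              exact add_le_add Hi le_rfl
      calc ‖F s t‖ * h ^ s ≤ (|(F s t).re| + |(F s t).im|) * h ^ s :=
            mul_le_mul_of_nonneg_right (hnormReIm _) (by positivity)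
        _ = |(F s t).re| * h ^ s + |(F s t).im| * h ^ s := by ring
        _ ≤ 2 * (6 ^ (s * s) * A + L * h ^ (s + 1)) := by linarith
        _ ≤ CC ^ (0 + 1) * E := by
            simp only [zero_add, pow_one, hCC_def, hE_def]
            nlinarith [h6m, hA, mul_nonneg hL (pow_nonneg hh.le (s+1))]
    | succ j ihj =>
      intro s hsm hs1 t ht
      have hsm' : (s + 1) + j = m := by omega
      have hsltm : s < m := by omega
      have IH : ∀ t ∈ Ioo γ δ, ‖F (s + 1) t‖ * h ^ (s + 1) ≤ CC ^ (j + 1) * E :=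
        fun t ht => ihj (s + 1) hsm' (by omega) t ht
      set K : ℝ := CC ^ (j + 1) * E with hK_def
      have hK0 : 0 ≤ K := by positivity
      have hKbd : ∀ x ∈ Ioo γ δ, ‖F (s + 1) x‖ ≤ K / h ^ (s + 1) := by
        intro x hx
        rw [le_div_iff₀ (by positivity)]
        exact IH x hx
      have hmvt : ∀ x ∈ Ioo γ δ, ∀ y ∈ Ioo γ δ, ‖F s y - F s x‖ ≤ K / h ^ (s + 1) * ‖y - x‖ :=
        fun x hx y hy =>
        (convex_Ioo γ δ).norm_image_sub_le_of_norm_hasDerivWithin_le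
          (fun z hz => (hder s hsltm z hz).hasDerivWithinAt) (fun z hz => hKbd z hz) hx hy
      have hstep : ∀ x ∈ Ioo γ δ, ∀ y ∈ Ioo γ δ, ‖F s y - F s x‖ * h ^ s ≤ K := by
        intro x hx y hy
        have h1 : ‖F s y - F s x‖ ≤ K / h ^ (s + 1) * h := by
          calc ‖F s y - F s x‖ ≤ K / h ^ (s + 1) * ‖y - x‖ := hmvt x hx y hy
            _ ≤ K / h ^ (s + 1) * h := by
                apply mul_le_mul_of_nonneg_left _ (by positivity)
                rw [Real.norm_eq_abs]; exact habs_le y hy x hx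
        calc ‖F s y - F s x‖ * h ^ s ≤ (K / h ^ (s + 1) * h) * h ^ s :=
              mul_le_mul_of_nonneg_right h1 (by positivity)
          _ = K := by field_simp [pow_succ]; ring
      obtain ⟨ξr, hξr, Hr⟩ := xire s hsltm.le γ δ le_rfl hγδ le_rfl
      obtain ⟨ξi, hξi, Hi⟩ := xiim s hsltm.le γ δ le_rfl hγδ le_rfl
      have hhr : |(F s t).re| * h ^ s ≤ 6 ^ (m * m) * A + K := by
        have h2 : |(F s t).re - (F s ξr).re| ≤ ‖F s t - F s ξr‖ := by
          have := Complex.abs_re_le_norm (F s t - F s ξr)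
          simpa [Complex.sub_re] using this
        have h1 : |(F s t).re| ≤ |(F s ξr).re| + ‖F s t - F s ξr‖ := by
          have h0 := abs_sub_abs_le_abs_sub (F s t).re (F s ξr).re
          linarith
        have h3 : (6:ℝ) ^ (s * s) ≤ 6 ^ (m * m) :=
          pow_le_pow_right₀ (by norm_num) (by nlinarith)
        have h4 : |(F s ξr).re| * h ^ s ≤ 6 ^ (m * m) * A := by
          calc |(F s ξr).re| * h ^ s ≤ 6 ^ (s * s) * A := Hr
            _ ≤ 6 ^ (m * m) * A := mul_le_mul_of_nonneg_right h3 hA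
        calc |(F s t).re| * h ^ s ≤ |(F s ξr).re| * h ^ s + ‖F s t - F s ξr‖ * h ^ s := by
              have := mul_le_mul_of_nonneg_right h1 (pow_nonneg hh.le s)
              linarith [this]
          _ ≤ 6 ^ (m * m) * A + K := add_le_add h4 (hstep ξr hξr t ht)
      have hhi : |(F s t).im| * h ^ s ≤ 6 ^ (m * m) * A + K := by
        have h2 : |(F s t).im - (F s ξi).im| ≤ ‖F s t - F s ξi‖ := by
          have := Complex.abs_im_le_norm (F s t - F s ξi)
          simpa [Complex.sub_im] using this
        have h1 : |(F s t).im| ≤ |(F s ξi).im| + ‖F s t - F s ξi‖ := by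
          have h0 := abs_sub_abs_le_abs_sub (F s t).im (F s ξi).im
          linarith
        have h3 : (6:ℝ) ^ (s * s) ≤ 6 ^ (m * m) :=
          pow_le_pow_right₀ (by norm_num) (by nlinarith)
        have h4 : |(F s ξi).im| * h ^ s ≤ 6 ^ (m * m) * A := by
          calc |(F s ξi).im| * h ^ s ≤ 6 ^ (s * s) * A := Hi
            _ ≤ 6 ^ (m * m) * A := mul_le_mul_of_nonneg_right h3 hA
        calc |(F s t).im| * h ^ s ≤ |(F s ξi).im| * h ^ s + ‖F s t - F s ξi‖ * h ^ s := by
              have := mul_le_mul_of_nonneg_right h1 (pow_nonneg hh.le s)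
              linarith [this]
          _ ≤ 6 ^ (m * m) * A + K := add_le_add h4 (hstep ξi hξi t ht)
      have hCCj : (1:ℝ) ≤ CC ^ (j + 1) := one_le_pow₀ hCC1
      calc ‖F s t‖ * h ^ s ≤ (|(F s t).re| + |(F s t).im|) * h ^ s :=
            mul_le_mul_of_nonneg_right (hnormReIm _) (by positivity)
        _ = |(F s t).re| * h ^ s + |(F s t).im| * h ^ s := by ring
        _ ≤ 2 * (6 ^ (m * m) * A + K) := by linarith
        _ ≤ CC ^ (j + 1 + 1) * E := by
            have key : 2 * (6 ^ (m * m) * A + K) ≤ (2 * 6 ^ (m * m) + 2 * CC ^ (j + 1)) * E := by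
              simp only [hK_def]
              nlinarith [mul_nonneg (pow_nonneg (le_trans zero_le_one hCC1) (j+1)) hE, hAE, hE]
            have key2 : (2 * 6 ^ (m * m) + 2 * CC ^ (j + 1)) * E ≤ CC ^ (j + 1 + 1) * E := by
              apply mul_le_mul_of_nonneg_right _ hE
              have : CC ^ (j + 1 + 1) = CC * CC ^ (j + 1) := by rw [pow_succ]; ring
              rw [this, hCC_def]
              nlinarith [hCCj, h6m]
            linarith
  intro s hs1 hsm t ht
  have hmain := main (m - s) s (by omega) hs1 t ht
  have hle : CC ^ (m - s + 1) * E ≤ CC ^ (m + 1) * E := by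
    apply mul_le_mul_of_nonneg_right _ hE
    exact pow_le_pow_right₀ hCC1 (by omega)
  calc ‖F s t‖ * h ^ s ≤ CC ^ (m - s + 1) * E := hmain
    _ ≤ CC ^ (m + 1) * E := hle

lemma iteratedDerivWithin_chain {α β : ℝ} (hαβ : α < β) (k : ℕ) (f : ℝ → ℂ)
    (hf : ContDiffOn ℝ k f (Icc α β)) :
    ∀ s, s + 1 ≤ k → ∀ t ∈ Ioo α β,
      HasDerivAt (iteratedDerivWithin s f (Icc α β))
        (iteratedDerivWithin (s + 1) f (Icc α β) t) t := by
  intro s hs t ht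
  have hU : UniqueDiffOn ℝ (Icc α β) := uniqueDiffOn_Icc hαβ
  have hcast : (s : WithTop ℕ∞) < (k : WithTop ℕ∞) := by exact_mod_cast (by omega : s < k)
  have hdiff : DifferentiableOn ℝ (iteratedDerivWithin s f (Icc α β)) (Icc α β) :=
    hf.differentiableOn_iteratedDerivWithin hcast hU
  have hmem : Icc α β ∈ nhds t := Icc_mem_nhds ht.1 ht.2
  have htIcc : t ∈ Icc α β := Ioo_subset_Icc_self ht
  have h1 : HasDerivWithinAt (iteratedDerivWithin s f (Icc α β))
      (derivWithin (iteratedDerivWithin s f (Icc α β)) (Icc α β) t) (Icc α β) t :=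
    (hdiff t htIcc).hasDerivWithinAt
  have h2 := h1.hasDerivAt hmem
  rwa [← iteratedDerivWithin_succ] at h2

lemma lip_power_bound {d dj : ℕ} (hd : 1 ≤ d) {L m0 h B : ℝ}
    (hL : 0 ≤ L) (hm0 : 0 < m0) (hh : 0 < h) (hB : 0 < B)
    (hineq : L ^ ((d : ℝ)⁻¹) * m0 ^ (((d : ℝ) - (dj : ℝ)) / d) * h ≤ B * m0) :
    L ≤ B ^ d * m0 ^ dj / h ^ d := by
  set u := L ^ ((d : ℝ)⁻¹) with hu_def
  set v := m0 ^ (((d : ℝ) - (dj : ℝ)) / d) with hv_def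
  have hdne : (d : ℝ) ≠ 0 := Nat.cast_ne_zero.mpr (by omega)
  have hv : 0 < v := Real.rpow_pos_of_pos hm0 _
  have hu : 0 ≤ u := Real.rpow_nonneg hL _
  have step1 : u ≤ B * m0 / (v * h) := by
    rw [le_div_iff₀ (by positivity)]
    calc u * (v * h) = u * v * h := by ring
      _ ≤ B * m0 := hineq
  have hLu : u ^ d = L := by
    rw [hu_def, ← Real.rpow_natCast (L ^ ((d : ℝ)⁻¹)) d, ← Real.rpow_mul hL,
      inv_mul_cancel₀ hdne, Real.rpow_one]
  have hvd : v ^ d = m0 ^ ((d : ℝ) - (dj : ℝ)) := by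
    rw [hv_def, ← Real.rpow_natCast (m0 ^ (((d : ℝ) - (dj : ℝ)) / d)) d,
      ← Real.rpow_mul hm0.le, div_mul_cancel₀ _ hdne]
  have step2 : L ≤ (B * m0 / (v * h)) ^ d := by
    rw [← hLu]
    exact pow_le_pow_left₀ hu step1 d
  have hm0d : m0 ^ (d : ℕ) = m0 ^ ((d : ℝ) - (dj : ℝ)) * m0 ^ (dj : ℕ) := by
    rw [← Real.rpow_natCast m0 d, ← Real.rpow_natCast m0 dj, ← Real.rpow_add hm0]
    norm_num
  have hne1 : m0 ^ ((d : ℝ) - (dj : ℝ)) ≠ 0 := (Real.rpow_pos_of_pos hm0 _).ne'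
  have hexp : (B * m0 / (v * h)) ^ d = B ^ d * m0 ^ dj / h ^ d := by
    rw [div_pow, mul_pow, mul_pow, hvd, hm0d]
    rw [mul_comm (B ^ d) _, mul_comm (m0 ^ ((d:ℝ) - (dj:ℝ))) (h ^ d)]
    field_simp
  rw [← hexp]
  exact step2

/-- **Step 1: the assumptions of the main theorem imply the local setup.**
Assume `V^G = {0}`.  Let `a ∈ C^{d-1,1}([α,β], ℂ^n)` with values in `σ(V)`, with
absolutely continuous selections `â_j` of `a_j^{1/d_j}`, let `0 < B < 1/3`, let
`t₀, k` satisfy `|â_k(t₀)| = max_j |â_j(t₀)| ≠ 0`, and let `I = (γ,δ) ∋ t₀` be an open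
subinterval of `(α,β)` such that `M|I| + Σ_j ‖â_j′‖_{L^1(I)} ≤ B |â_k(t₀)|`, where
`M = max_j Lip_I(a_j^{(d-1)})^{1/d} |â_k(t₀)|^{(d-d_j)/d}`.  Then there is a constant
`C` depending only on `d` (and `B`) such that for all `j` and `s = 1,…,d-1`:
`‖a_j^{(s)}‖_{L^∞(I)} ≤ C |I|^{-s} |â_k(t₀)|^{d_j}` and
`Lip_I(a_j^{(d-1)}) ≤ C |I|^{-d} |â_k(t₀)|^{d_j}`. -/
theorem local_setup_estimates
    (d : ℕ) (hd : 1 ≤ d) (B : ℝ) (hB0 : 0 < B) (hB : B < 1 / 3) :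
    ∃ C : ℝ, 0 < C ∧
      ∀ (G : Type) (_ : Group G) (_ : Fintype G) (N n : ℕ)
        (ρ : Representation ℂ G (Fin N → ℂ))
        (σ : Fin n → MvPolynomial (Fin N) ℂ) (dd : Fin n → ℕ),
        IsBasicInvariantSystem ρ σ →
        (∀ j, (σ j).IsHomogeneous (dd j)) →
        (∀ j, 1 ≤ dd j) →
        d = Finset.univ.sup dd →
        (∀ v : Fin N → ℂ, (∀ g : G, ρ g v = v) → v = 0) →
        ∀ α β : ℝ, α < β →
        ∀ a : ℝ → Fin n → ℂ,
          (∀ j, CkLipOn (d - 1) (fun t => a t j) (Set.Icc α β)) →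
          (∀ t ∈ Set.Icc α β, a t ∈ Set.range (polyMap σ)) →
        ∀ ahat : Fin n → ℝ → ℂ,
          (∀ j, ∀ t ∈ Set.Ioo α β, ahat j t ^ dd j = a t j) →
          (∀ j, ContinuousOn (ahat j) (Set.Ioo α β)) →
          (∀ j, AbsolutelyContinuousOn (ahat j) (Set.Ioo α β)) →
          (∀ j, IntegrableOn (deriv (ahat j)) (Set.Ioo α β)) →
        ∀ t₀ : ℝ, ∀ k : Fin n,
          (∀ j, ‖ahat j t₀‖ ≤ ‖ahat k t₀‖) → ahat k t₀ ≠ 0 →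
        ∀ γ δ : ℝ, t₀ ∈ Set.Ioo γ δ → Set.Ioo γ δ ⊆ Set.Ioo α β →
          (⨆ j, (lipConstOn (iteratedDerivWithin (d - 1) (fun t => a t j) (Set.Icc α β))
                (Set.Ioo γ δ)) ^ ((d : ℝ)⁻¹) *
              ‖ahat k t₀‖ ^ (((d : ℝ) - (dd j : ℝ)) / d)) * (δ - γ) +
            (∑ j, ∫ t in Set.Ioo γ δ, ‖deriv (ahat j) t‖) ≤ B * ‖ahat k t₀‖ →
          ∀ j, (∀ s : ℕ, 1 ≤ s → s ≤ d - 1 → ∀ t ∈ Set.Ioo γ δ,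
              ‖iteratedDerivWithin s (fun u => a u j) (Set.Icc α β) t‖ ≤
                C * (δ - γ) ^ (-(s : ℝ)) * ‖ahat k t₀‖ ^ dd j) ∧
            lipConstOn (iteratedDerivWithin (d - 1) (fun u => a u j) (Set.Icc α β))
                (Set.Ioo γ δ) ≤
              C * (δ - γ) ^ (-(d : ℝ)) * ‖ahat k t₀‖ ^ dd j := by
  set C : ℝ := (2 * 6 ^ ((d - 1) * (d - 1)) + 2) ^ d * (2 ^ d + 1) + 1 with hC_def
  have hCpos : 0 < C := by positivity
  refine ⟨C, hCpos, ?_⟩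
  intro G _ _ N n ρ σ dd hbasic hhom hdd1 hdsup hVG α β hαβ a ha hrange ahat hpow hcont hac
    hint t₀ k hmax hk0 γ δ ht₀ hsub hineq j
  have hne : Nonempty (Fin n) := ⟨k⟩
  set m0 : ℝ := ‖ahat k t₀‖ with hm0_def
  have hm0 : 0 < m0 := norm_pos_iff.mpr hk0
  have hγδ : γ < δ := lt_trans ht₀.1 ht₀.2
  have hh : 0 < δ - γ := by linarith
  have hIooIcc : Ioo γ δ ⊆ Icc α β := fun t ht => Ioo_subset_Icc_self (hsub ht)
  have hddj_le : ∀ j', dd j' ≤ d := fun j' => by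
    rw [hdsup]; exact Finset.le_sup (Finset.mem_univ j')
  -- notation
  set Lip : Fin n → ℝ := fun j' =>
    lipConstOn (iteratedDerivWithin (d - 1) (fun t => a t j') (Icc α β)) (Ioo γ δ) with hLip_def
  have hLip0 : ∀ j', 0 ≤ Lip j' := fun j' => lipConstOn_nonneg _ _
  -- extract the two bounds from hineq
  have hSup_ge : ∀ j', Lip j' ^ ((d : ℝ)⁻¹) * m0 ^ (((d : ℝ) - (dd j' : ℝ)) / d) ≤
      ⨆ j', Lip j' ^ ((d : ℝ)⁻¹) * m0 ^ (((d : ℝ) - (dd j' : ℝ)) / d) := fun j' =>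
    le_ciSup (f := fun j' => Lip j' ^ ((d : ℝ)⁻¹) * m0 ^ (((d : ℝ) - (dd j' : ℝ)) / d))
      (Set.Finite.bddAbove (Set.finite_range _)) j'
  have htermpos : ∀ j', 0 ≤ Lip j' ^ ((d : ℝ)⁻¹) * m0 ^ (((d : ℝ) - (dd j' : ℝ)) / d) :=
    fun j' => mul_nonneg (Real.rpow_nonneg (hLip0 j') _) (Real.rpow_pos_of_pos hm0 _).le
  have hS0 : 0 ≤ ⨆ j', Lip j' ^ ((d : ℝ)⁻¹) * m0 ^ (((d : ℝ) - (dd j' : ℝ)) / d) :=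
    le_trans (htermpos k) (hSup_ge k)
  have hint0 : ∀ j', 0 ≤ ∫ t in Ioo γ δ, ‖deriv (ahat j') t‖ := fun j' =>
    setIntegral_nonneg measurableSet_Ioo (fun t _ => norm_nonneg _)
  have hsum0 : 0 ≤ ∑ j', ∫ t in Ioo γ δ, ‖deriv (ahat j') t‖ :=
    Finset.sum_nonneg (fun j' _ => hint0 j')
  have hS0h : (⨆ j', Lip j' ^ ((d : ℝ)⁻¹) * m0 ^ (((d : ℝ) - (dd j' : ℝ)) / d)) * (δ - γ)
      ≤ B * m0 := by linarith [hineq]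
  have hterm : ∀ j', Lip j' ^ ((d : ℝ)⁻¹) * m0 ^ (((d : ℝ) - (dd j' : ℝ)) / d) * (δ - γ)
      ≤ B * m0 := fun j' =>
    le_trans (mul_le_mul_of_nonneg_right (hSup_ge j') hh.le) hS0h
  have hintj : ∀ j', (∫ t in Ioo γ δ, ‖deriv (ahat j') t‖) ≤ B * m0 := by
    intro j'
    have h1 : (∫ t in Ioo γ δ, ‖deriv (ahat j') t‖) ≤
        ∑ i, ∫ t in Ioo γ δ, ‖deriv (ahat i) t‖ :=
      Finset.single_le_sum (fun i _ => hint0 i) (Finset.mem_univ j')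
    have h2 : 0 ≤ (⨆ j', Lip j' ^ ((d : ℝ)⁻¹) * m0 ^ (((d : ℝ) - (dd j' : ℝ)) / d)) * (δ - γ) :=
      mul_nonneg hS0 hh.le
    linarith [hineq]
  -- Lipschitz bound
  have hLipBound : ∀ j', Lip j' ≤ B ^ d * m0 ^ dd j' / (δ - γ) ^ d := fun j' =>
    lip_power_bound hd (hLip0 j') hm0 hh hB0 (hterm j')
  have hBd1 : B ^ d ≤ 1 := pow_le_one₀ hB0.le (by linarith)
  have hC1 : (1 : ℝ) ≤ C := by
    have : (0:ℝ) ≤ (2 * 6 ^ ((d - 1) * (d - 1)) + 2) ^ d * (2 ^ d + 1) := by positivity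
    simp only [hC_def]; linarith
  have hrpow_d : (δ - γ) ^ (-(d : ℝ)) = ((δ - γ) ^ (d : ℕ))⁻¹ := by
    rw [Real.rpow_neg hh.le, Real.rpow_natCast]
  constructor
  · -- derivative bounds
    intro s hs1 hs2 t ht
    have hd2 : 2 ≤ d := by omega
    set f : ℝ → ℂ := fun u => a u j with hf_def
    have hCk : ContDiffOn ℝ (d - 1) f (Icc α β) := (ha j).1
    have hcast1 : ((1:ℕ) : WithTop ℕ∞) ≤ ((d - 1 : ℕ) : WithTop ℕ∞) :=
      Nat.mono_cast (by omega)
    have hdOn : DifferentiableOn ℝ f (Icc α β) :=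
      (ha j).1.differentiableOn
        (by exact_mod_cast (show d - 1 ≠ 0 by omega))
    have hfd : ∀ u ∈ Ioo α β, DifferentiableAt ℝ f u := fun u hu =>
      (hdOn u (Ioo_subset_Icc_self hu)).differentiableAt (Icc_mem_nhds hu.1 hu.2)
    -- sup bound on f
    have hAbound : ∀ u ∈ Ioo γ δ, ‖f u‖ ≤ 2 ^ d * m0 ^ dd j := by
      intro u hu
      have hsel := root_selection_bound (dd j) (hdd1 j) (ahat j) f α β γ δ hγδ hsub
        (hcont j) (fun t' ht' => hpow j t' ht') hfd (hint j) hu ht₀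
      have h2 : ‖ahat j u‖ ≤ 2 * m0 := by
        have h3 : ‖ahat j t₀‖ ≤ m0 := hmax j
        have h4 := hintj j
        have hBm : B * m0 ≤ m0 := by nlinarith
        linarith
      have h5 : ‖f u‖ = ‖ahat j u‖ ^ dd j := by
        show ‖a u j‖ = _
        rw [← hpow j u (hsub hu), norm_pow]
      rw [h5]
      calc ‖ahat j u‖ ^ dd j ≤ (2 * m0) ^ dd j :=
            pow_le_pow_left₀ (norm_nonneg _) h2 _
        _ = 2 ^ dd j * m0 ^ dd j := mul_pow 2 m0 (dd j)
        _ ≤ 2 ^ d * m0 ^ dd j := by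
            apply mul_le_mul_of_nonneg_right _ (by positivity)
            exact pow_le_pow_right₀ one_le_two (hddj_le j)
    -- apply interpolation
    set F : ℕ → ℝ → ℂ := fun s u => iteratedDerivWithin s f (Icc α β) u with hF_def
    have hm1 : 1 ≤ d - 1 := by omega
    have hder : ∀ i, i < d - 1 → ∀ u ∈ Ioo γ δ, HasDerivAt (F i) (F (i + 1) u) u := by
      intro i hi u hu
      exact iteratedDerivWithin_chain hαβ (d - 1) f hCk i (by omega) u (hsub hu)
    have hbound0 : ∀ u ∈ Ioo γ δ, ‖F 0 u‖ ≤ 2 ^ d * m0 ^ dd j := by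
      intro u hu
      have : F 0 u = f u := by simp [hF_def]
      rw [this]
      exact hAbound u hu
    have hlipF : ∀ x ∈ Ioo γ δ, ∀ y ∈ Ioo γ δ, ‖F (d-1) x - F (d-1) y‖ ≤ Lip j * |x - y| := by
      intro x hx y hy
      have hnonempty : ∃ C₀ : ℝ, 0 ≤ C₀ ∧ ∀ x ∈ Ioo γ δ, ∀ y ∈ Ioo γ δ,
          ‖iteratedDerivWithin (d-1) (fun t => a t j) (Icc α β) x -
            iteratedDerivWithin (d-1) (fun t => a t j) (Icc α β) y‖ ≤ C₀ * |x - y| := by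
        obtain ⟨C₀, hC₀, hC₀'⟩ := (ha j).2
        exact ⟨C₀, hC₀, fun x hx y hy => hC₀' x (hIooIcc hx) y (hIooIcc hy)⟩
      exact lipConstOn_spec hnonempty x hx y hy
    have hsup := sup_deriv_bound (d - 1) hm1 F γ δ (2 ^ d * m0 ^ dd j) (Lip j) hγδ
      (by positivity) (hLip0 j) hder hbound0 hlipF s hs1 hs2 t ht
    have hd1e : d - 1 + 1 = d := by omega
    rw [hd1e] at hsup
    -- bound L * h^d
    have hLh : Lip j * (δ - γ) ^ d ≤ m0 ^ dd j := by
      have h1 := hLipBound j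
      have h2 : Lip j * (δ - γ) ^ d ≤ B ^ d * m0 ^ dd j := by
        rw [div_eq_mul_inv] at h1
        calc Lip j * (δ - γ) ^ d ≤ (B ^ d * m0 ^ dd j * ((δ - γ) ^ d)⁻¹) * (δ - γ) ^ d :=
              mul_le_mul_of_nonneg_right h1 (by positivity)
          _ = B ^ d * m0 ^ dd j := by field_simp
      calc Lip j * (δ - γ) ^ d ≤ B ^ d * m0 ^ dd j := h2
        _ ≤ 1 * m0 ^ dd j := mul_le_mul_of_nonneg_right hBd1 (by positivity)
        _ = m0 ^ dd j := one_mul _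
    have hfinal : ‖F s t‖ * (δ - γ) ^ s ≤ C * m0 ^ dd j := by
      calc ‖F s t‖ * (δ - γ) ^ s
          ≤ (2 * 6 ^ ((d-1) * (d-1)) + 2) ^ d * (2 ^ d * m0 ^ dd j + Lip j * (δ - γ) ^ d) :=
            hsup
        _ ≤ (2 * 6 ^ ((d-1) * (d-1)) + 2) ^ d * (2 ^ d * m0 ^ dd j + m0 ^ dd j) := by
            apply mul_le_mul_of_nonneg_left _ (by positivity)
            linarith [hLh]
        _ = (2 * 6 ^ ((d-1) * (d-1)) + 2) ^ d * (2 ^ d + 1) * m0 ^ dd j := by ring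
        _ ≤ C * m0 ^ dd j := by
            apply mul_le_mul_of_nonneg_right _ (by positivity)
            simp only [hC_def]; linarith
    -- convert to the rpow form
    have hrpow_s : (δ - γ) ^ (-(s : ℝ)) = ((δ - γ) ^ (s : ℕ))⁻¹ := by
      rw [Real.rpow_neg hh.le, Real.rpow_natCast]
    rw [hrpow_s]
    have hpos : (0:ℝ) < (δ - γ) ^ s := by positivity
    calc ‖iteratedDerivWithin s (fun u => a u j) (Icc α β) t‖ = ‖F s t‖ := rfl
      _ ≤ C * m0 ^ dd j / (δ - γ) ^ s := by rw [le_div_iff₀ hpos]; exact hfinal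
      _ = C * ((δ - γ) ^ s)⁻¹ * m0 ^ dd j := by rw [div_eq_mul_inv]; ring
  · -- Lipschitz conclusion
    rw [hrpow_d]
    have h1 := hLipBound j
    calc lipConstOn (iteratedDerivWithin (d - 1) (fun u => a u j) (Icc α β)) (Ioo γ δ)
        = Lip j := rfl
      _ ≤ B ^ d * m0 ^ dd j / (δ - γ) ^ d := h1
      _ ≤ C * ((δ - γ) ^ d)⁻¹ * m0 ^ dd j := by
          rw [div_eq_mul_inv]
          have : B ^ d ≤ C := le_trans hBd1 hC1
          calc B ^ d * m0 ^ dd j * ((δ - γ) ^ d)⁻¹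
              ≤ C * m0 ^ dd j * ((δ - γ) ^ d)⁻¹ := by
                apply mul_le_mul_of_nonneg_right _ (by positivity)
                exact mul_le_mul_of_nonneg_right this (by positivity)
            _ = C * ((δ - γ) ^ d)⁻¹ * m0 ^ dd j := by ring
end
end
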